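/- arXiv:2211.13913 — 6 statements merged into one kernel-verified Lean document; each statement's English description precedes it below -/
import Mathlib

section
/- Let A = ∏_p A_p be a product over all primes p of profinite groups A_p, each equipped with its normalized Haar probability measure ν_p, and let ν = ∏_p ν_p be the product measure on A. For each prime p let χ_p : A_p → {±1} be a continuous group homomorphism (a quadratic character), with χ_p trivial for all but finitely many p, and let χ = ∏_p χ_p : A → {±1} (i.e. χ((x_p)_p) = ∏_p χ_p(x_p)); assume χ is non-trivial. Let G = ker χ. For each prime p let S_p ⊆ A_p be a ν_p-measurable subset with ν_p(S_p) > 0, and let S = ∏_p S_p ⊆ A. Then ν(G ∩ S)/ν(G) = (1 + ∏_p (1/ν_p(S_p)) ∫_{S_p} χ_p dν_p) · ν(S)/ν(A), where the infinite products are well defined because all but finitely many factors equal 1 (respectively ν_p(S_p)). -/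
open MeasureTheory

lemma aux_single {ι : Type*} [DecidableEq ι] (A : ι → Type*) [∀ p, Group (A p)] [∀ p, TopologicalSpace (A p)]
    [∀ p, IsTopologicalGroup (A p)] [∀ p, CompactSpace (A p)] [∀ p, T2Space (A p)]
    [∀ p, MeasurableSpace (A p)] [∀ p, BorelSpace (A p)]
    (ν : ∀ p, Measure (A p)) [∀ p, (ν p).IsHaarMeasure] [∀ p, IsProbabilityMeasure (ν p)]
    (νA : Measure (∀ p, A p)) [νA.IsMulLeftInvariant] [IsProbabilityMeasure νA]
    (q : ι) (C : Set (∀ p, A p)) (hC : MeasurableSet C)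
    (hCinv : ∀ g : A q, (fun x => Function.update x q (g * x q)) ⁻¹' C = C)
    (B : Set (A q)) (hB : MeasurableSet B) :
    νA (C ∩ (fun x => x q) ⁻¹' B) = νA C * ν q B := by
  have hπm : Measurable (fun x : ∀ p, A p => x q) := measurable_pi_apply q
  set m : Measure (A q) := Measure.map (fun x : ∀ p, A p => x q) (νA.restrict C) with hm
  have hfin : IsFiniteMeasure m := by
    constructor
    rw [hm, Measure.map_apply hπm MeasurableSet.univ]
    exact measure_lt_top _ _
  have hinv : m.IsMulLeftInvariant := by
    constructor
    intro g
    have hT : Measurable (fun x : ∀ p, A p => (Function.update (1 : ∀ p, A p) q g) * x) :=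
      measurable_const_mul _
    have hTeq : (fun x : ∀ p, A p => (Function.update (1 : ∀ p, A p) q g) * x)
        = fun x => Function.update x q (g * x q) := by
      funext x; funext p
      by_cases hp : p = q
      · subst hp; simp [Function.update_self]
      · simp [Function.update_of_ne hp]
    have hTC : (fun x : ∀ p, A p => (Function.update (1 : ∀ p, A p) q g) * x) ⁻¹' C = C := by
      rw [hTeq]; exact hCinv g
    have hcomp : ((fun y : A q => g * y) ∘ fun x : ∀ p, A p => x q)
        = (fun x : ∀ p, A p => x q) ∘ (fun x => (Function.update (1 : ∀ p, A p) q g) * x) := by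
      funext x; simp [Function.update_self]
    rw [hm, Measure.map_map (measurable_const_mul g) hπm, hcomp,
      ← Measure.map_map hπm hT]
    congr 1
    calc Measure.map (fun x => (Function.update (1 : ∀ p, A p) q g) * x) (νA.restrict C)
        = Measure.map (fun x => (Function.update (1 : ∀ p, A p) q g) * x)
            (νA.restrict ((fun x => (Function.update (1 : ∀ p, A p) q g) * x) ⁻¹' C)) := by
          rw [hTC]
      _ = (Measure.map (fun x => (Function.update (1 : ∀ p, A p) q g) * x) νA).restrict C :=
          (Measure.restrict_map hT hC).symm
      _ = νA.restrict C := congrArg (·.restrict C) (map_mul_left_eq_self νA _)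
  have huniq := Measure.isMulInvariant_eq_smul_of_compactSpace m (ν q)
  have h1 : m Set.univ = νA C := by
    rw [hm, Measure.map_apply hπm MeasurableSet.univ, Set.preimage_univ,
      Measure.restrict_apply MeasurableSet.univ, Set.univ_inter]
  have h2 : m B = νA (C ∩ (fun x : ∀ p, A p => x q) ⁻¹' B) := by
    rw [hm, Measure.map_apply hπm hB, Measure.restrict_apply (hπm hB), Set.inter_comm]
  have hB' := congrArg (fun μ : Measure (A q) => μ B) huniq
  have hU := congrArg (fun μ : Measure (A q) => μ Set.univ) huniq
  simp only [Measure.smul_apply, ENNReal.smul_def, smul_eq_mul, measure_univ, mul_one] at hB' hU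
  rw [← h2, hB', ← hU, h1]

lemma aux_pi {ι : Type*} [DecidableEq ι] (A : ι → Type*) [∀ p, Group (A p)]
    [∀ p, TopologicalSpace (A p)]
    [∀ p, IsTopologicalGroup (A p)] [∀ p, CompactSpace (A p)] [∀ p, T2Space (A p)]
    [∀ p, MeasurableSpace (A p)] [∀ p, BorelSpace (A p)]
    (ν : ∀ p, Measure (A p)) [∀ p, (ν p).IsHaarMeasure] [∀ p, IsProbabilityMeasure (ν p)]
    (νA : Measure (∀ p, A p)) [νA.IsMulLeftInvariant] [IsProbabilityMeasure νA]
    (E : Finset ι) (C : Set (∀ p, A p)) (hC : MeasurableSet C)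
    (hCinv : ∀ q ∈ E, ∀ g : A q, (fun x => Function.update x q (g * x q)) ⁻¹' C = C)
    (B : ∀ p, Set (A p)) (hB : ∀ p, MeasurableSet (B p)) :
    νA (C ∩ Set.pi ↑E B) = νA C * ∏ p ∈ E, ν p (B p) := by
  classical
  induction E using Finset.induction with
  | empty => simp
  | @insert q E hq ih =>
    have hCE : MeasurableSet (C ∩ Set.pi ↑E B) :=
      hC.inter (MeasurableSet.pi (Set.to_countable _) (fun p _ => hB p))
    have hinv : ∀ g : A q,
        (fun x => Function.update x q (g * x q)) ⁻¹' (C ∩ Set.pi ↑E B)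
          = C ∩ Set.pi ↑E B := by
      intro g
      rw [Set.preimage_inter, hCinv q (Finset.mem_insert_self q E) g]
      congr 1
      ext x
      simp only [Set.mem_preimage, Set.mem_pi, Finset.mem_coe]
      refine forall_congr' fun p => forall_congr' fun hp => ?_
      have : p ≠ q := fun h => hq (h ▸ hp)
      rw [Function.update_of_ne this]
    have step := aux_single A ν νA q (C ∩ Set.pi ↑E B) hCE hinv (B q) (hB q)
    have hset : C ∩ Set.pi ↑(insert q E) B
        = (C ∩ Set.pi ↑E B) ∩ (fun x : ∀ p, A p => x q) ⁻¹' (B q) := by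
      rw [Finset.coe_insert, Set.insert_pi]
      ext x
      simp only [Set.mem_inter_iff, Set.mem_preimage, Set.mem_pi]
      tauto
    rw [hset, step, ih (fun p hp g => hCinv p (Finset.mem_insert_of_mem hp) g),
      Finset.prod_insert hq]
    ring

/-- **Lenstra–Moree–Stevenhagen character sums theorem** (Theorem 3.3 of LMS).
`A = ∏_p A_p` is a product of profinite groups indexed by the primes, each `A_p` carrying
its normalized Haar probability measure `ν p`; `ν_A` is the normalized Haar probability
measure on the (profinite) product `A`; `χ = ∏_p χ_p` is a non-trivial quadratic character
built from continuous local quadratic characters `χ_p`, almost all trivial;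
`G = ker χ`; and `S = ∏_p S_p` for measurable `S_p ⊆ A_p` of positive measure. Then
`ν(G ∩ S)/ν(G) = (1 + ∏_p (1/ν_p(S_p)) ∫_{S_p} χ_p dν_p) · ν(S)/ν(A)`. -/
theorem character_sums_density
    (A : Nat.Primes → Type*) [∀ p, Group (A p)] [∀ p, TopologicalSpace (A p)]
    [∀ p, IsTopologicalGroup (A p)] [∀ p, CompactSpace (A p)] [∀ p, T2Space (A p)]
    [∀ p, TotallyDisconnectedSpace (A p)]
    [∀ p, MeasurableSpace (A p)] [∀ p, BorelSpace (A p)]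
    (ν : ∀ p, Measure (A p))
    [∀ p, (ν p).IsHaarMeasure] [∀ p, IsProbabilityMeasure (ν p)]
    (νA : Measure (∀ p, A p)) [νA.IsHaarMeasure] [IsProbabilityMeasure νA]
    (χ : ∀ p, A p →* ℝ) (hχcont : ∀ p, Continuous (χ p))
    (hχquad : ∀ p x, χ p x = 1 ∨ χ p x = -1)
    (hχfin : {p | χ p ≠ 1}.Finite)
    (hχnontriv : ∃ x : ∀ p, A p, (∏ᶠ p, χ p (x p)) ≠ 1)
    (S : ∀ p, Set (A p)) (hSmeas : ∀ p, MeasurableSet (S p))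
    (hSpos : ∀ p, 0 < ν p (S p)) :
    (νA ({x | (∏ᶠ p, χ p (x p)) = 1} ∩ Set.univ.pi S)).toReal /
        (νA {x | (∏ᶠ p, χ p (x p)) = 1}).toReal =
      (1 + ∏ᶠ p, (1 / (ν p (S p)).toReal) * ∫ x in S p, χ p x ∂ν p) *
        ((νA (Set.univ.pi S)).toReal / (νA Set.univ).toReal) := by
  classical
  set F : Finset Nat.Primes := hχfin.toFinset with hF
  have hmem : ∀ p, p ∈ F ↔ χ p ≠ 1 := fun p => hχfin.mem_toFinset
  have hrep : ∀ x : ∀ p, A p, (∏ᶠ p, χ p (x p)) = ∏ p ∈ F, χ p (x p) := by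
    intro x
    apply finprod_eq_prod_of_mulSupport_subset
    intro p hp
    rw [Function.mem_mulSupport] at hp
    rw [Finset.mem_coe, hmem]
    intro h
    exact hp (by rw [h]; rfl)
  have hquadF : ∀ (s : Finset Nat.Primes) (x : ∀ p, A p),
      (∏ p ∈ s, χ p (x p)) = 1 ∨ (∏ p ∈ s, χ p (x p)) = -1 := by
    intro s x
    induction s using Finset.induction with
    | empty => left; simp
    | @insert q s hq ih =>
      rw [Finset.prod_insert hq]
      rcases hχquad q (x q) with h | h <;> rcases ih with h' | h' <;>
        rw [h, h'] <;> norm_num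
  have hcont : Continuous (fun x : ∀ p, A p => ∏ p ∈ F, χ p (x p)) :=
    continuous_finset_prod _ (fun p _ => (hχcont p).comp (continuous_apply p))
  have hGset : {x : ∀ p, A p | (∏ᶠ p, χ p (x p)) = 1}
      = (fun x : ∀ p, A p => ∏ p ∈ F, χ p (x p)) ⁻¹' {1} := by
    ext x; simp [hrep x]
  have hmeasProd : Measurable (fun x : ∀ p, A p => ∏ p ∈ F, χ p (x p)) :=
    Finset.measurable_prod _ (fun p _ => ((hχcont p).measurable).comp (measurable_pi_apply p))
  have hGmeas : MeasurableSet {x : ∀ p, A p | (∏ᶠ p, χ p (x p)) = 1} := by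
    rw [hGset]; exact hmeasProd (measurableSet_singleton 1)
  have hmul : ∀ g x : ∀ p, A p, (∏ p ∈ F, χ p ((g * x) p))
      = (∏ p ∈ F, χ p (g p)) * ∏ p ∈ F, χ p (x p) := by
    intro g x
    rw [← Finset.prod_mul_distrib]
    exact Finset.prod_congr rfl fun p _ => by simp [map_mul]
  -- G has measure 1/2
  obtain ⟨g, hg⟩ := hχnontriv
  have hgval : (∏ p ∈ F, χ p (g p)) = -1 := by
    rcases hquadF F g with h | h
    · exact absurd (by rw [hrep g]; exact h) hg
    · exact h
  have hGpre : {x : ∀ p, A p | (∏ᶠ p, χ p (x p)) = 1}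
      = (fun x => g * x) ⁻¹' {x : ∀ p, A p | (∏ᶠ p, χ p (x p)) = 1}ᶜ := by
    ext x
    simp only [Set.mem_preimage, Set.mem_compl_iff, Set.mem_setOf_eq, hrep, hmul, hgval]
    constructor
    · intro h; rw [h]; norm_num
    · intro h
      rcases hquadF F x with h' | h'
      · exact h'
      · exact absurd (by rw [h']; ring) h
  have hGhalf : (νA {x : ∀ p, A p | (∏ᶠ p, χ p (x p)) = 1}).toReal = 1/2 := by
    have hcompl : νA {x : ∀ p, A p | (∏ᶠ p, χ p (x p)) = 1}
        = νA {x : ∀ p, A p | (∏ᶠ p, χ p (x p)) = 1}ᶜ := by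
      conv_lhs => rw [hGpre]
      exact measure_preimage_mul νA g _
    have hsum := measure_add_measure_compl (μ := νA) hGmeas
    rw [← hcompl, measure_univ] at hsum
    have h2 := congrArg ENNReal.toReal hsum
    rw [ENNReal.toReal_add (measure_ne_top _ _) (measure_ne_top _ _), ENNReal.toReal_one] at h2
    linarith
  -- positive / negative parts
  set Pp : ∀ p, Set (A p) := fun p => S p ∩ (χ p) ⁻¹' {1} with hPpdef
  set Pm : ∀ p, Set (A p) := fun p => S p ∩ (χ p) ⁻¹' {-1} with hPmdef
  have hPpm : ∀ p, MeasurableSet (Pp p) := fun p =>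
    (hSmeas p).inter ((hχcont p).measurable (measurableSet_singleton _))
  have hPmm : ∀ p, MeasurableSet (Pm p) := fun p =>
    (hSmeas p).inter ((hχcont p).measurable (measurableSet_singleton _))
  have hdisj : ∀ p, Disjoint (Pp p) (Pm p) := by
    intro p
    rw [Set.disjoint_left]
    rintro x ⟨-, h1⟩ ⟨-, h2⟩
    simp only [Set.mem_preimage, Set.mem_singleton_iff] at h1 h2
    rw [h1] at h2; norm_num at h2
  have hunion : ∀ p, Pp p ∪ Pm p = S p := by
    intro p; ext x
    simp only [Set.mem_union, Set.mem_inter_iff, Set.mem_preimage, Set.mem_singleton_iff,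
      hPpdef, hPmdef]
    constructor
    · rintro (⟨h, -⟩ | ⟨h, -⟩) <;> exact h
    · intro h
      rcases hχquad p x with h' | h'
      · exact Or.inl ⟨h, h'⟩
      · exact Or.inr ⟨h, h'⟩
  set a : Nat.Primes → ℝ := fun p => (ν p (Pp p)).toReal with hadef
  set b : Nat.Primes → ℝ := fun p => (ν p (Pm p)).toReal with hbdef
  have hab : ∀ p, (ν p (S p)).toReal = a p + b p := by
    intro p
    rw [← hunion p, measure_union (hdisj p) (hPmm p),
      ENNReal.toReal_add (measure_ne_top _ _) (measure_ne_top _ _)]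
  have hspos : ∀ p, 0 < a p + b p := by
    intro p
    rw [← hab p]
    exact ENNReal.toReal_pos (hSpos p).ne' (measure_ne_top _ _)
  -- the local integrals
  have hint : ∀ p, (∫ x in S p, χ p x ∂ν p) = a p - b p := by
    intro p
    have hi : Integrable (fun x => χ p x) (ν p) := by
      refine Integrable.mono' (integrable_const 1) ((hχcont p).aestronglyMeasurable) ?_
      filter_upwards with x
      rcases hχquad p x with h | h <;> rw [h] <;> norm_num
    rw [← hunion p, setIntegral_union (hdisj p) (hPmm p) hi.integrableOn hi.integrableOn]
    have h1 : (∫ x in Pp p, χ p x ∂ν p) = a p := by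
      have he : (∫ x in Pp p, χ p x ∂ν p) = ∫ _x in Pp p, (1 : ℝ) ∂ν p :=
        setIntegral_congr_fun (hPpm p) (fun x hx => hx.2)
      rw [he, setIntegral_const, smul_eq_mul, mul_one, measureReal_def]
    have h2 : (∫ x in Pm p, χ p x ∂ν p) = -b p := by
      have he : (∫ x in Pm p, χ p x ∂ν p) = ∫ _x in Pm p, (-1 : ℝ) ∂ν p :=
        setIntegral_congr_fun (hPmm p) (fun x hx => hx.2)
      rw [he, setIntegral_const, smul_eq_mul, mul_neg_one, measureReal_def]
    rw [h1, h2]; ring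
  -- the finprod equals the finite product
  have hcF : (∏ᶠ p, (1 / (ν p (S p)).toReal) * ∫ x in S p, χ p x ∂ν p)
      = ∏ p ∈ F, (1 / (a p + b p)) * (a p - b p) := by
    have hsupp : ∀ p ∉ F, (1 / (ν p (S p)).toReal) * (∫ x in S p, χ p x ∂ν p) = 1 := by
      intro p hp
      have hχ1 : χ p = 1 := by
        by_contra h; exact hp ((hmem p).2 h)
      have hone : (∫ x in S p, χ p x ∂ν p) = (ν p (S p)).toReal := by
        rw [hχ1]
        simp only [MonoidHom.one_apply]
        rw [setIntegral_const, smul_eq_mul, mul_one, measureReal_def]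
      rw [hone, one_div_mul_cancel]
      exact (ENNReal.toReal_pos (hSpos p).ne' (measure_ne_top _ _)).ne'
    rw [finprod_eq_prod_of_mulSupport_subset _ (s := F) ?_]
    · exact Finset.prod_congr rfl fun p _ => by rw [hab p, hint p]
    · intro p hp
      rw [Function.mem_mulSupport] at hp
      rw [Finset.mem_coe]
      by_contra hpF
      exact hp (hsupp p hpF)
  -- the cylinder set C
  set C : Set (∀ p, A p) := Set.pi (↑F : Set Nat.Primes)ᶜ S with hCdef
  have hCm : MeasurableSet C :=
    MeasurableSet.pi (Set.to_countable _) (fun p _ => hSmeas p)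
  have hCinv : ∀ q ∈ F, ∀ g : A q, (fun x => Function.update x q (g * x q)) ⁻¹' C = C := by
    intro q hq g
    ext x
    simp only [Set.mem_preimage, hCdef, Set.mem_pi, Set.mem_compl_iff, Finset.mem_coe]
    refine forall_congr' fun p => ?_
    by_cases hpq : p = q
    · subst hpq; simp [hq]
    · rw [Function.update_of_ne hpq]
  have hSsplit : Set.univ.pi S = C ∩ Set.pi ↑F S := by
    ext x
    simp only [Set.mem_pi, Set.mem_univ, forall_true_left, Set.mem_inter_iff, hCdef,
      Set.mem_compl_iff, Finset.mem_coe, true_implies]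
    constructor
    · intro h; exact ⟨fun p _ => h p, fun p _ => h p⟩
    · rintro ⟨h1, h2⟩ p
      by_cases hp : p ∈ F
      · exact h2 p hp
      · exact h1 p hp
  have hSval : νA (Set.univ.pi S) = νA C * ∏ p ∈ F, ν p (S p) := by
    rw [hSsplit]; exact aux_pi A ν νA F C hCm hCinv S hSmeas
  -- the pieces of G ∩ S
  set BT : Finset Nat.Primes → ∀ p, Set (A p) := fun T p => if p ∈ T then Pm p else Pp p
    with hBTdef
  have hBTm : ∀ T p, MeasurableSet (BT T p) := by
    intro T p
    by_cases h : p ∈ T <;> simp only [hBTdef, if_pos, if_neg, h, ite_true, ite_false]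
    · exact hPmm p
    · exact hPpm p
  have hprodval : ∀ T ∈ F.powerset, ∀ x : ∀ p, A p, (∀ p ∈ F, x p ∈ BT T p) →
      (∏ p ∈ F, χ p (x p)) = (-1 : ℝ) ^ T.card := by
    intro T hT x hx
    rw [Finset.mem_powerset] at hT
    rw [← Finset.prod_sdiff hT]
    have h1 : (∏ p ∈ F \ T, χ p (x p)) = 1 := by
      refine Finset.prod_eq_one fun p hp => ?_
      have hmemx := hx p (Finset.mem_sdiff.1 hp).1
      have hpT : p ∉ T := (Finset.mem_sdiff.1 hp).2
      simp only [hBTdef, if_neg hpT] at hmemx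
      exact hmemx.2
    have h2 : (∏ p ∈ T, χ p (x p)) = (-1 : ℝ) ^ T.card := by
      rw [← Finset.prod_const]
      refine Finset.prod_congr rfl fun p hp => ?_
      have hmemx := hx p (hT hp)
      simp only [hBTdef, if_pos hp] at hmemx
      exact hmemx.2
    rw [h1, h2, one_mul]
  set 𝒯 : Finset (Finset Nat.Primes) := F.powerset.filter (fun T => Even T.card) with h𝒯
  have hGS : {x : ∀ p, A p | (∏ᶠ p, χ p (x p)) = 1} ∩ Set.univ.pi S
      = ⋃ T ∈ 𝒯, (C ∩ Set.pi ↑F (BT T)) := by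
    ext x
    simp only [Set.mem_inter_iff, Set.mem_setOf_eq, Set.mem_iUnion, h𝒯, Finset.mem_filter,
      Finset.mem_powerset, Set.mem_pi, Set.mem_univ, true_implies, exists_prop,
      Set.mem_compl_iff, Finset.mem_coe, hCdef, hrep]
    constructor
    · rintro ⟨hx1, hx2⟩
      refine ⟨F.filter (fun p => χ p (x p) = -1), ?_⟩
      set T := F.filter (fun p => χ p (x p) = -1) with hTdef
      have hTF : T ⊆ F := Finset.filter_subset _ _
      have hxB : ∀ p ∈ F, x p ∈ BT T p := by
        intro p hp
        by_cases hpm : χ p (x p) = -1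
        · have hpT : p ∈ T := Finset.mem_filter.2 ⟨hp, hpm⟩
          simp only [hBTdef, if_pos hpT]
          exact ⟨hx2 p, hpm⟩
        · have hpT : p ∉ T := fun h => hpm (Finset.mem_filter.1 h).2
          simp only [hBTdef, if_neg hpT]
          exact ⟨hx2 p, (hχquad p (x p)).resolve_right hpm⟩
      have heven : Even T.card := by
        have hv := hprodval T (Finset.mem_powerset.2 hTF) x hxB
        rw [hx1] at hv
        exact (neg_one_pow_eq_one_iff_even (by norm_num : (-1 : ℝ) ≠ 1)).1 hv.symm
      exact ⟨⟨hTF, heven⟩, fun p hp => hx2 p, hxB⟩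
    · rintro ⟨T, ⟨hTF, hTeven⟩, hxC, hxB⟩
      constructor
      · rw [hprodval T (Finset.mem_powerset.2 hTF) x hxB, hTeven.neg_one_pow]
      · intro p
        by_cases hp : p ∈ F
        · have hmemx := hxB p hp
          by_cases hpT : p ∈ T
          · simp only [hBTdef, if_pos hpT] at hmemx; exact hmemx.1
          · simp only [hBTdef, if_neg hpT] at hmemx; exact hmemx.1
        · exact hxC p hp
  have hdisjU : (↑𝒯 : Set (Finset Nat.Primes)).PairwiseDisjoint
      (fun T => C ∩ Set.pi ↑F (BT T)) := by
    intro T hT T' hT' hne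
    simp only [h𝒯, Finset.coe_filter, Set.mem_setOf_eq, Finset.mem_powerset] at hT hT'
    rw [Function.onFun, Set.disjoint_left]
    rintro x ⟨-, hx1⟩ ⟨-, hx2⟩
    obtain ⟨p, hp⟩ : ∃ p, ¬(p ∈ T ↔ p ∈ T') := by
      by_contra h
      push_neg at h
      exact hne (Finset.ext fun p => h p)
    have key : ∀ (U V : Finset Nat.Primes), U ⊆ F → p ∈ U → p ∉ V →
        x ∈ Set.pi ↑F (BT U) → x ∈ Set.pi ↑F (BT V) → False := by
      intro U V hUF hpU hpV hxU hxV
      have h1 := Set.mem_pi.1 hxU p (hUF hpU)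
      have h2 := Set.mem_pi.1 hxV p (hUF hpU)
      simp only [hBTdef, if_pos hpU] at h1
      simp only [hBTdef, if_neg hpV] at h2
      have e1 : χ p (x p) = -1 := h1.2
      have e2 : χ p (x p) = 1 := h2.2
      rw [e2] at e1; norm_num at e1
    by_cases hpT : p ∈ T
    · have hpT' : p ∉ T' := fun h => hp ⟨fun _ => h, fun _ => hpT⟩
      exact key T T' hT.1 hpT hpT' hx1 hx2
    · have hpT' : p ∈ T' := by
        by_contra h
        exact hp ⟨fun h' => absurd h' hpT, fun h' => absurd h' h⟩
      exact key T' T hT'.1 hpT' hpT hx2 hx1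
  have hGSval : νA ({x : ∀ p, A p | (∏ᶠ p, χ p (x p)) = 1} ∩ Set.univ.pi S)
      = ∑ T ∈ 𝒯, νA C * ∏ p ∈ F, ν p (BT T p) := by
    rw [hGS, measure_biUnion_finset hdisjU (fun T _ =>
      hCm.inter (MeasurableSet.pi (Set.to_countable _) fun p _ => hBTm T p))]
    exact Finset.sum_congr rfl fun T _ => aux_pi A ν νA F C hCm hCinv (BT T) (hBTm T)
  -- pass to real numbers
  have htoRealGS : (νA ({x : ∀ p, A p | (∏ᶠ p, χ p (x p)) = 1} ∩ Set.univ.pi S)).toReal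
      = ∑ T ∈ 𝒯, (νA C).toReal * ∏ p ∈ F, (if p ∈ T then b p else a p) := by
    rw [hGSval, ENNReal.toReal_sum (fun T _ => ENNReal.mul_ne_top (measure_ne_top _ _)
      (ENNReal.prod_lt_top (fun p _ => measure_lt_top _ _)).ne)]
    refine Finset.sum_congr rfl fun T _ => ?_
    rw [ENNReal.toReal_mul, ENNReal.toReal_prod]
    congr 1
    refine Finset.prod_congr rfl fun p _ => ?_
    by_cases h : p ∈ T <;> simp only [hBTdef, h, ite_true, ite_false, if_pos, if_neg,
      hadef, hbdef]
  have hSreal : (νA (Set.univ.pi S)).toReal = (νA C).toReal * ∏ p ∈ F, (a p + b p) := by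
    rw [hSval, ENNReal.toReal_mul, ENNReal.toReal_prod]
    congr 1
    exact Finset.prod_congr rfl fun p _ => hab p
  -- combinatorial identities
  have hw : ∀ T ∈ F.powerset, (∏ p ∈ F, (if p ∈ T then b p else a p))
      = (∏ p ∈ T, b p) * ∏ p ∈ F \ T, a p := by
    intro T hT
    rw [Finset.mem_powerset] at hT
    rw [← Finset.prod_sdiff hT, mul_comm]
    congr 1
    · exact Finset.prod_congr rfl fun p hp => if_pos hp
    · exact Finset.prod_congr rfl fun p hp => if_neg (Finset.mem_sdiff.1 hp).2
  have hnegprod : ∀ T : Finset Nat.Primes, (∏ p ∈ T, -b p) = (-1 : ℝ) ^ T.card * ∏ p ∈ T, b p := by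
    intro T
    rw [← Finset.prod_const, ← Finset.prod_mul_distrib]
    exact Finset.prod_congr rfl fun p _ => by rw [neg_one_mul]
  have hsum2 : (∏ p ∈ F, (a p + b p)) + (∏ p ∈ F, (a p - b p))
      = 2 * ∑ T ∈ 𝒯, (∏ p ∈ T, b p) * ∏ p ∈ F \ T, a p := by
    have h1 : (∏ p ∈ F, (b p + a p)) = ∑ T ∈ F.powerset, (∏ p ∈ T, b p) * ∏ p ∈ F \ T, a p :=
      Finset.prod_add b a F
    have h2 : (∏ p ∈ F, (-b p + a p))
        = ∑ T ∈ F.powerset, ((-1 : ℝ) ^ T.card * ∏ p ∈ T, b p) * ∏ p ∈ F \ T, a p := by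
      rw [Finset.prod_add (fun p => -b p) a F]
      exact Finset.sum_congr rfl fun T _ => by rw [hnegprod T]
    calc (∏ p ∈ F, (a p + b p)) + (∏ p ∈ F, (a p - b p))
        = (∏ p ∈ F, (b p + a p)) + (∏ p ∈ F, (-b p + a p)) := by
          congr 1 <;> exact Finset.prod_congr rfl fun p _ => by ring
      _ = ∑ T ∈ F.powerset, (1 + (-1 : ℝ) ^ T.card) * ((∏ p ∈ T, b p) * ∏ p ∈ F \ T, a p) := by
          rw [h1, h2, ← Finset.sum_add_distrib]
          exact Finset.sum_congr rfl fun T _ => by ring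
      _ = ∑ T ∈ F.powerset, (if Even T.card
            then 2 * ((∏ p ∈ T, b p) * ∏ p ∈ F \ T, a p) else 0) := by
          refine Finset.sum_congr rfl fun T _ => ?_
          by_cases h : Even T.card
          · rw [if_pos h, h.neg_one_pow]; ring
          · rw [if_neg h, (Nat.not_even_iff_odd.1 h).neg_one_pow]; ring
      _ = ∑ T ∈ 𝒯, 2 * ((∏ p ∈ T, b p) * ∏ p ∈ F \ T, a p) := by
          rw [h𝒯, Finset.sum_filter]
      _ = 2 * ∑ T ∈ 𝒯, (∏ p ∈ T, b p) * ∏ p ∈ F \ T, a p := by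
          rw [Finset.mul_sum]
  have hcprod : (∏ p ∈ F, (1 / (a p + b p)) * (a p - b p)) * (∏ p ∈ F, (a p + b p))
      = ∏ p ∈ F, (a p - b p) := by
    rw [← Finset.prod_mul_distrib]
    refine Finset.prod_congr rfl fun p _ => ?_
    have h := (hspos p).ne'
    field_simp
  -- final assembly
  rw [htoRealGS, hGhalf, hcF, hSreal, measure_univ, ENNReal.toReal_one]
  have hsum' : (∑ T ∈ 𝒯, (νA C).toReal * ∏ p ∈ F, (if p ∈ T then b p else a p))
      = (νA C).toReal * ∑ T ∈ 𝒯, (∏ p ∈ T, b p) * ∏ p ∈ F \ T, a p := by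
    rw [Finset.mul_sum]
    refine Finset.sum_congr rfl fun T hT => ?_
    rw [hw T (Finset.mem_filter.1 hT).1]
  rw [hsum']
  set t := (νA C).toReal
  set Ssum := ∑ T ∈ 𝒯, (∏ p ∈ T, b p) * ∏ p ∈ F \ T, a p
  linear_combination (-t) * hcprod - t * hsum2
end

section
/- Let ((G(n))_{n≥1}, (i_{n₁,n₂})_{n₁∣n₂}) and ((A(n))_{n≥1}, (j_{n₁,n₂})_{n₁∣n₂}) be inverse systems of finite groups indexed by the positive integers ordered by divisibility, with all transition maps surjective group homomorphisms. Assume that for each n there is an injective group homomorphism r_n : G(n) → A(n) compatible with the transition maps, i.e. r_{n₁} ∘ i_{n₁,n₂} = j_{n₁,n₂} ∘ r_{n₂} whenever n₁ ∣ n₂. Let G = lim← G(n) and A = lim← A(n) be the profinite inverse limits, r : G → A the induced injective continuous homomorphism, π_{A,n} : A → A(n) the canonical projections, and ν_A the normalized Haar probability measure on A. Let m ≥ 1, let μ_m ⊆ ℂ^× be the group of m-th roots of unity, and suppose χ : A → μ_m is a continuous homomorphism such that the sequence 1 → G → A → μ_m → 1 (with maps r and χ) is exact, i.e. χ is surjective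 and ker χ = r(G). Let g : ℕ≥1 → ℂ satisfy ∑_{n≥1} |g(n)|/#G(n) < ∞ and set g̃ = ∑_{n≥1} g(n)·1_{ker π_{A,n}} (pointwise sum of scaled indicator functions). Then g̃ ∈ L¹(ν_A) and ∑_{n≥1} g(n)/#G(n) = ∑_{i=0}^{m−1} ∫_A g̃ · χ^i dν_A. -/
open MeasureTheory

/-- The inverse limit of a system of groups indexed by `ℕ+` ordered by divisibility,
realized as the subgroup of compatible sequences in the product. -/
def dvdLimit (A : ℕ+ → Type) [∀ n, Group (A n)]
    (j : ∀ n₁ n₂ : ℕ+, n₁ ∣ n₂ → (A n₂ →* A n₁)) : Subgroup (∀ n, A n) where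
  carrier := {x | ∀ (n₁ n₂ : ℕ+) (h : n₁ ∣ n₂), j n₁ n₂ h (x n₂) = x n₁}
  one_mem' := by intro n₁ n₂ h; simp
  mul_mem' := by
    intro x y hx hy n₁ n₂ h
    simp only [Pi.mul_apply, map_mul, hx n₁ n₂ h, hy n₁ n₂ h]
  inv_mem' := by
    intro x hx n₁ n₂ h
    simp only [Pi.inv_apply, map_inv, hx n₁ n₂ h]

/-- The homomorphism between inverse limits induced by a compatible family of
homomorphisms `r n : G n →* A n`. -/
def limMap (G A : ℕ+ → Type) [∀ n, Group (G n)] [∀ n, Group (A n)]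
    (i : ∀ n₁ n₂ : ℕ+, n₁ ∣ n₂ → (G n₂ →* G n₁))
    (j : ∀ n₁ n₂ : ℕ+, n₁ ∣ n₂ → (A n₂ →* A n₁))
    (r : ∀ n, G n →* A n)
    (hr : ∀ (n₁ n₂ : ℕ+) (h : n₁ ∣ n₂), (r n₁).comp (i n₁ n₂ h) = (j n₁ n₂ h).comp (r n₂)) :
    ↥(dvdLimit G i) →* ↥(dvdLimit A j) where
  toFun x := ⟨fun n => r n ((x : ∀ n, G n) n), by
    intro n₁ n₂ h
    have hx := x.2 n₁ n₂ h
    have hcomp := congrArg (fun f => f ((x : ∀ n, G n) n₂)) (hr n₁ n₂ h)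
    simp only [MonoidHom.comp_apply] at hcomp
    rw [← hcomp, hx]⟩
  map_one' := by
    ext n
    simp
  map_mul' := by
    intro x y
    ext n
    simp

section Aux

open MeasureTheory

lemma measure_subgroup_of_index {Γ : Type} [Group Γ] [MeasurableSpace Γ] [MeasurableMul Γ]
    (μ : Measure Γ) [IsProbabilityMeasure μ] [μ.IsMulLeftInvariant]
    (S : Subgroup Γ) (hS : MeasurableSet (S : Set Γ)) (hfin : S.index ≠ 0) :
    μ (S : Set Γ) = 1 / (S.index : ENNReal) := by
  have hfinQ : Finite (Γ ⧸ S) := by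
    rw [Subgroup.index] at hfin
    exact (Nat.card_ne_zero.mp hfin).2
  haveI : Fintype (Γ ⧸ S) := Fintype.ofFinite _
  have key : ∀ g : Γ, {x : Γ | (x : Γ ⧸ S) = (g : Γ ⧸ S)} = (fun h => g⁻¹ * h) ⁻¹' (S : Set Γ) := by
    intro g
    ext x
    simp only [Set.mem_setOf_eq, Set.mem_preimage, SetLike.mem_coe]
    rw [eq_comm, QuotientGroup.eq]
  have hfiber : ∀ q : Γ ⧸ S, μ {x : Γ | (x : Γ ⧸ S) = q} = μ (S : Set Γ) := by
    intro q
    obtain ⟨g, rfl⟩ := QuotientGroup.mk_surjective q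
    rw [key g]
    exact measure_preimage_mul μ g⁻¹ _
  have hm : ∀ q : Γ ⧸ S, MeasurableSet {x : Γ | (x : Γ ⧸ S) = q} := by
    intro q
    obtain ⟨g, rfl⟩ := QuotientGroup.mk_surjective q
    rw [key g]
    exact (measurable_const_mul g⁻¹) hS
  have hcover : (Set.univ : Set Γ) = ⋃ q : Γ ⧸ S, {x : Γ | (x : Γ ⧸ S) = q} := by
    ext x; simp
  have hdisj : Pairwise (Function.onFun Disjoint fun q : Γ ⧸ S => {x : Γ | (x : Γ ⧸ S) = q}) := by
    intro q₁ q₂ hne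
    simp only [Function.onFun, Set.disjoint_left, Set.mem_setOf_eq]
    rintro x rfl h; exact hne (h ▸ rfl)
  have huniv := measure_univ (μ := μ)
  rw [hcover, measure_iUnion hdisj hm] at huniv
  rw [tsum_eq_sum (s := Finset.univ) (by simp)] at huniv
  simp only [hfiber, Finset.sum_const, Finset.card_univ, nsmul_eq_mul] at huniv
  have hcard : (Fintype.card (Γ ⧸ S) : ENNReal) = (S.index : ENNReal) := by
    rw [Subgroup.index, Nat.card_eq_fintype_card]
  rw [hcard] at huniv
  rw [ENNReal.eq_div_iff (by exact_mod_cast hfin) (by simp)]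
  exact huniv

lemma ker_index_eq {L : Type} [Group L] (χ : L →* ℂ) (m : ℕ) (hm : 1 ≤ m)
    (hχroot : ∀ x, χ x ^ m = 1)
    (hχsurj : ∀ z : ℂ, z ^ m = 1 → ∃ x, χ x = z) :
    χ.toHomUnits.ker.index = m := by
  haveI : NeZero m := ⟨by omega⟩
  have hrange : χ.toHomUnits.range = rootsOfUnity m ℂ := by
    ext u
    simp only [MonoidHom.mem_range, mem_rootsOfUnity]
    constructor
    · rintro ⟨x, rfl⟩
      ext
      simpa using hχroot x
    · intro hu
      obtain ⟨x, hx⟩ := hχsurj u (by rw [← Units.val_pow_eq_pow_val, hu, Units.val_one])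
      exact ⟨x, Units.ext (by simpa using hx)⟩
  rw [Subgroup.index_ker, hrange]
  exact Complex.card_rootsOfUnity m

end Aux

lemma dvdLimit_proj_surjective (A : ℕ+ → Type) [∀ n, Group (A n)]
    (j : ∀ n₁ n₂ : ℕ+, n₁ ∣ n₂ → (A n₂ →* A n₁))
    (hjid : ∀ n, j n n dvd_rfl = MonoidHom.id _)
    (hjcomp : ∀ (n₁ n₂ n₃ : ℕ+) (h₁₂ : n₁ ∣ n₂) (h₂₃ : n₂ ∣ n₃),
      (j n₁ n₂ h₁₂).comp (j n₂ n₃ h₂₃) = j n₁ n₃ (h₁₂.trans h₂₃))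
    (hjsurj : ∀ (n₁ n₂ : ℕ+) (h : n₁ ∣ n₂), Function.Surjective (j n₁ n₂ h))
    (n : ℕ+) (a : A n) :
    ∃ x ∈ dvdLimit A j, x n = a := by
  classical
  -- the cofinal chain c k = n * k!
  set c : ℕ → ℕ+ := fun k => n * ⟨Nat.factorial k, Nat.factorial_pos k⟩ with hc_def
  have hstep : ∀ k, c k ∣ c (k + 1) := by
    intro k
    have : (c k : ℕ) ∣ (c (k + 1) : ℕ) := by
      simp only [hc_def, PNat.mul_coe, PNat.mk_coe]
      exact Nat.mul_dvd_mul_left _ (Nat.factorial_dvd_factorial (Nat.le_succ k))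
    exact (PNat.dvd_iff ..).mpr this
  have hle : ∀ k l : ℕ, k ≤ l → c k ∣ c l := by
    intro k l hkl
    induction l with
    | zero => simpa [Nat.le_zero.mp hkl] using dvd_rfl
    | succ l ih =>
      rcases Nat.lt_or_ge k (l+1) with h | h
      · exact (ih (Nat.lt_succ_iff.mp h)).trans (hstep l)
      · have : k = l + 1 := le_antisymm hkl h
        subst this; exact dvd_rfl
  have hmem : ∀ m : ℕ+, m ∣ c (m : ℕ) := by
    intro m
    refine (PNat.dvd_iff ..).mpr ?_
    simp only [hc_def, PNat.mul_coe, PNat.mk_coe]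
    exact Dvd.dvd.mul_left (Nat.dvd_factorial m.pos le_rfl) _
  have hn : ∀ k, n ∣ c k := fun k => Dvd.intro _ rfl
  -- construct the chain of elements by recursion
  have a0 : ∃ b : A (c 0), j n (c 0) (hn 0) b = a := hjsurj n (c 0) (hn 0) a
  let y : ∀ k, A (c k) := fun k => Nat.rec a0.choose
    (fun k yk => (hjsurj (c k) (c (k+1)) (hstep k) yk).choose) k
  have hy0 : j n (c 0) (hn 0) (y 0) = a := a0.choose_spec
  have hychain : ∀ k, j (c k) (c (k+1)) (hstep k) (y (k+1)) = y k := fun k =>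
    (hjsurj (c k) (c (k+1)) (hstep k) (y k)).choose_spec
  have hyle : ∀ k l (h : k ≤ l), j (c k) (c l) (hle k l h) (y l) = y k := by
    intro k l h
    induction l with
    | zero =>
      have : k = 0 := Nat.le_zero.mp h
      subst this
      have := congrArg (fun f => f (y 0)) (hjid (c 0))
      simpa using this
    | succ l ih =>
      rcases Nat.lt_or_ge k (l+1) with h' | h'
      · have hk : k ≤ l := Nat.lt_succ_iff.mp h'
        have hcomp := congrArg (fun f => f (y (l+1)))
          (hjcomp (c k) (c l) (c (l+1)) (hle k l hk) (hstep l))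
        simp only [MonoidHom.comp_apply] at hcomp
        rw [← hcomp, hychain l, ih hk]
      · have : k = l + 1 := le_antisymm h h'
        subst this
        have := congrArg (fun f => f (y (l+1))) (hjid (c (l+1)))
        simpa using this
  -- assemble the element of the limit
  refine ⟨fun m => j m (c (m : ℕ)) (hmem m) (y (m : ℕ)), ?_, ?_⟩
  · intro m₁ m₂ h
    have hle12 : (m₁ : ℕ) ≤ (m₂ : ℕ) := Nat.le_of_dvd m₂.pos ((PNat.dvd_iff ..).mp h)
    have hcd : c (m₁ : ℕ) ∣ c (m₂ : ℕ) := hle _ _ hle12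
    have h1 := congrArg (fun f => f (y (m₂ : ℕ)))
      (hjcomp m₁ m₂ (c (m₂ : ℕ)) h (hmem m₂))
    simp only [MonoidHom.comp_apply] at h1
    have h2 := congrArg (fun f => f (y (m₂ : ℕ)))
      (hjcomp m₁ (c (m₁ : ℕ)) (c (m₂ : ℕ)) (hmem m₁) hcd)
    simp only [MonoidHom.comp_apply] at h2
    rw [h1, ← h2, hyle _ _ hle12]
  · show j n (c (n : ℕ)) (hmem n) (y (n : ℕ)) = a
    have h1 := congrArg (fun f => f (y (n : ℕ)))
      (hjcomp n (c 0) (c (n : ℕ)) (hn 0) (hle 0 (n : ℕ) (Nat.zero_le _)))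
    simp only [MonoidHom.comp_apply] at h1
    rw [← h1, hyle 0 (n : ℕ) (Nat.zero_le _), hy0]

/-- **Theorem 1.4**: for surjective inverse systems `(G(n))`, `(A(n))` of finite groups over
`(ℕ≥1, ∣)` with compatible injections `r_n : G(n) → A(n)`, an exact sequence
`1 → G → A → μ_m → 1` of profinite groups with `χ` continuous, and `g` with
`∑ |g(n)|/#G(n) < ∞`, the function `g̃ = ∑_n g(n)·1_{ker π_{A,n}}` is `ν_A`-integrable and
`∑_{n≥1} g(n)/#G(n) = ∑_{i=0}^{m−1} ∫_A g̃·χ^i dν_A`. -/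
theorem profinite_character_sum_formula
    (G A : ℕ+ → Type) [∀ n, Group (G n)] [∀ n, Group (A n)]
    [∀ n, Fintype (G n)] [∀ n, Fintype (A n)] [∀ n, DecidableEq (A n)]
    [∀ n, TopologicalSpace (A n)] [∀ n, DiscreteTopology (A n)]
    [∀ n, MeasurableSpace (A n)] [∀ n, BorelSpace (A n)]
    (i : ∀ n₁ n₂ : ℕ+, n₁ ∣ n₂ → (G n₂ →* G n₁))
    (j : ∀ n₁ n₂ : ℕ+, n₁ ∣ n₂ → (A n₂ →* A n₁))
    -- inverse system axioms
    (hiid : ∀ n, i n n dvd_rfl = MonoidHom.id _)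
    (hjid : ∀ n, j n n dvd_rfl = MonoidHom.id _)
    (hicomp : ∀ (n₁ n₂ n₃ : ℕ+) (h₁₂ : n₁ ∣ n₂) (h₂₃ : n₂ ∣ n₃),
      (i n₁ n₂ h₁₂).comp (i n₂ n₃ h₂₃) = i n₁ n₃ (h₁₂.trans h₂₃))
    (hjcomp : ∀ (n₁ n₂ n₃ : ℕ+) (h₁₂ : n₁ ∣ n₂) (h₂₃ : n₂ ∣ n₃),
      (j n₁ n₂ h₁₂).comp (j n₂ n₃ h₂₃) = j n₁ n₃ (h₁₂.trans h₂₃))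
    (hisurj : ∀ (n₁ n₂ : ℕ+) (h : n₁ ∣ n₂), Function.Surjective (i n₁ n₂ h))
    (hjsurj : ∀ (n₁ n₂ : ℕ+) (h : n₁ ∣ n₂), Function.Surjective (j n₁ n₂ h))
    -- compatible injections r_n
    (r : ∀ n, G n →* A n) (hrinj : ∀ n, Function.Injective (r n))
    (hr : ∀ (n₁ n₂ : ℕ+) (h : n₁ ∣ n₂), (r n₁).comp (i n₁ n₂ h) = (j n₁ n₂ h).comp (r n₂))
    -- the exact sequence 1 → G → A → μ_m → 1
    (m : ℕ) (hm : 1 ≤ m)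
    (χ : ↥(dvdLimit A j) →* ℂ) (hχcont : Continuous χ)
    (hχroot : ∀ x, χ x ^ m = 1)
    (hχsurj : ∀ z : ℂ, z ^ m = 1 → ∃ x, χ x = z)
    (hχker : ∀ x, χ x = 1 ↔ x ∈ (limMap G A i j r hr).range)
    -- the normalized Haar measure on A
    (νA : Measure ↥(dvdLimit A j)) [νA.IsHaarMeasure] [IsProbabilityMeasure νA]
    -- the arithmetic function g
    (g : ℕ+ → ℂ)
    (hsum : Summable fun n : ℕ+ => ‖g n‖ / (Nat.card (G n) : ℝ)) :
    Integrable
        (fun x : ↥(dvdLimit A j) =>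
          ∑' n : ℕ+, if (x : ∀ n', A n') n = 1 then g n else 0) νA ∧
    ∑' n : ℕ+, g n / (Nat.card (G n) : ℂ) =
      ∑ t ∈ Finset.range m,
        ∫ x, (∑' n : ℕ+, if (x : ∀ n', A n') n = 1 then g n else 0) * χ x ^ t ∂νA := by

  classical
  haveI hsc : ∀ n, SecondCountableTopology (A n) := fun n => inferInstance
  haveI hBP : BorelSpace (∀ n, A n) := Pi.borelSpace
  haveI hBL : BorelSpace ↥(dvdLimit A j) := Subtype.borelSpace _
  haveI hTG : ∀ n, IsTopologicalGroup (A n) := fun n => ⟨⟩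
  haveI : IsTopologicalGroup ↥(dvdLimit A j) := inferInstance
  haveI : MeasurableMul ↥(dvdLimit A j) := inferInstance
  set πA : ∀ n, ↥(dvdLimit A j) →* A n :=
    fun n => (Pi.evalMonoidHom A n).comp (dvdLimit A j).subtype with hπA
  set πG : ∀ n, ↥(dvdLimit G i) →* G n :=
    fun n => (Pi.evalMonoidHom G n).comp (dvdLimit G i).subtype with hπG
  set ρ : ↥(dvdLimit G i) →* ↥(dvdLimit A j) := limMap G A i j r hr with hρ
  set Hc : Subgroup ↥(dvdLimit A j) := ρ.range with hHc
  set K : ℕ+ → Subgroup ↥(dvdLimit A j) := fun n => (πA n).ker with hK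
  set S : ℕ+ → Subgroup ↥(dvdLimit A j) := fun n => Hc ⊓ K n with hS
  -- surjectivity of the projections
  have hπAsurj : ∀ n, Function.Surjective (πA n) := by
    intro n b
    obtain ⟨x, hx, hxn⟩ := dvdLimit_proj_surjective A j hjid hjcomp hjsurj n b
    exact ⟨⟨x, hx⟩, hxn⟩
  have hπGsurj : ∀ n, Function.Surjective (πG n) := by
    intro n b
    obtain ⟨x, hx, hxn⟩ := dvdLimit_proj_surjective G i hiid hicomp hisurj n b
    exact ⟨⟨x, hx⟩, hxn⟩
  -- index computations
  have hcGpos : ∀ n : ℕ+, 0 < Nat.card (G n) := fun n => Nat.card_pos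
  have hKindex : ∀ n, (K n).index = Nat.card (A n) := by
    intro n
    rw [hK, Subgroup.index_ker, MonoidHom.range_eq_top.mpr (hπAsurj n)]
    exact Subgroup.card_top
  have hGker : ∀ n, (πG n).ker.index = Nat.card (G n) := by
    intro n
    rw [Subgroup.index_ker, MonoidHom.range_eq_top.mpr (hπGsurj n)]
    exact Subgroup.card_top
  have hcomap : ∀ n, (K n).comap ρ = (πG n).ker := by
    intro n
    ext x
    simp only [hK, Subgroup.mem_comap, MonoidHom.mem_ker]
    have : πA n (ρ x) = r n (πG n x) := rfl
    rw [this]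
    constructor
    · intro h
      exact hrinj n (by simpa using h)
    · intro h
      rw [h, map_one]
  have hrel : ∀ n, (K n).relIndex Hc = Nat.card (G n) := by
    intro n
    rw [hHc, ← Subgroup.index_comap, hcomap n, hGker n]
  have hHcKer : Hc = χ.toHomUnits.ker := by
    ext x
    rw [hHc, ← hχker x, MonoidHom.mem_ker]
    constructor
    · intro h
      exact Units.ext (by simpa using h)
    · intro h
      have := congrArg (Units.val ·) h
      simpa using this
  have hHcindex : Hc.index = m := by
    rw [hHcKer]
    exact ker_index_eq χ m hm hχroot hχsurj
  have hSindex : ∀ n, (S n).index = Nat.card (G n) * m := by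
    intro n
    rw [← Subgroup.relIndex_mul_index (inf_le_left : S n ≤ Hc), hHcindex]
    rw [Subgroup.inf_relIndex_left, hrel n]
  -- measurability
  haveI : ∀ n, MeasurableSingletonClass (A n) := fun n => inferInstance
  have hevalmeas : ∀ n, Measurable (fun x : ↥(dvdLimit A j) => (x : ∀ n', A n') n) :=
    fun n => (measurable_pi_apply n).comp measurable_subtype_coe
  have hKmeas : ∀ n, MeasurableSet ((K n : Set ↥(dvdLimit A j))) := by
    intro n
    have : (K n : Set ↥(dvdLimit A j)) = (fun x : ↥(dvdLimit A j) => (x : ∀ n', A n') n) ⁻¹' {1} := by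
      ext x
      simp [hK, MonoidHom.mem_ker, hπA]
    rw [this]
    exact hevalmeas n (measurableSet_singleton 1)
  have hχmeas : Measurable χ := hχcont.measurable
  have hHcmeas : MeasurableSet (Hc : Set ↥(dvdLimit A j)) := by
    have : (Hc : Set ↥(dvdLimit A j)) = χ ⁻¹' {1} := by
      ext x
      simp only [Set.mem_preimage, Set.mem_singleton_iff, SetLike.mem_coe]
      rw [hχker x, hHc]
    rw [this]
    exact hχmeas (measurableSet_singleton 1)
  have hSmeas : ∀ n, MeasurableSet ((S n : Set ↥(dvdLimit A j))) := by
    intro n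
    have : (S n : Set ↥(dvdLimit A j)) = (Hc : Set _) ∩ (K n : Set _) := rfl
    rw [this]
    exact hHcmeas.inter (hKmeas n)
  -- measures
  have hSfin : ∀ n, (S n).index ≠ 0 := by
    intro n
    rw [hSindex n]
    exact Nat.mul_ne_zero (hcGpos n).ne' (by omega)
  have hνS : ∀ n, νA (S n : Set ↥(dvdLimit A j)) = 1 / ((Nat.card (G n) : ENNReal) * m) := by
    intro n
    rw [measure_subgroup_of_index νA (S n) (hSmeas n) (hSfin n), hSindex n]
    push_cast
    ring_nf
  have hνK : ∀ n, νA (K n : Set _) ≤ 1 / (Nat.card (G n) : ENNReal) := by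
    intro n
    have hfin : (K n).index ≠ 0 := by
      rw [hKindex n]
      exact Nat.card_pos.ne'
    rw [measure_subgroup_of_index νA (K n) (hKmeas n) hfin, hKindex n]
    apply ENNReal.div_le_div_left
    exact_mod_cast Nat.card_le_card_of_injective (r n) (hrinj n)
  -- the summands as indicator functions
  set f : ℕ+ → ↥(dvdLimit A j) → ℂ :=
    fun n => Set.indicator (K n : Set _) (fun _ => g n) with hf
  have hmemK : ∀ (x : ↥(dvdLimit A j)) n, x ∈ K n ↔ (x : ∀ n', A n') n = 1 := by
    intro x n
    simp [hK, MonoidHom.mem_ker, hπA]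
  have hfeq : ∀ (x : ↥(dvdLimit A j)) (n : ℕ+),
      (if (x : ∀ n', A n') n = 1 then g n else 0) = f n x := by
    intro x n
    simp only [hf]
    by_cases h : (x : ∀ n', A n') n = 1
    · rw [if_pos h, Set.indicator_of_mem ((hmemK x n).mpr h)]
    · rw [if_neg h, Set.indicator_of_notMem (fun hmem => h ((hmemK x n).mp hmem))]
  have hFeq : (fun x : ↥(dvdLimit A j) =>
      ∑' n : ℕ+, if (x : ∀ n', A n') n = 1 then g n else 0) = fun x => ∑' n, f n x := by
    funext x
    exact tsum_congr fun n => hfeq x n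
  have hfint : ∀ n, Integrable (f n) νA := fun n => (integrable_const (g n)).indicator (hKmeas n)
  -- the ℝ≥0 summable majorant
  have hcGne : ∀ n : ℕ+, (Nat.card (G n) : NNReal) ≠ 0 := by
    intro n
    exact_mod_cast (hcGpos n).ne'
  set β : ℕ+ → NNReal := fun n => ‖g n‖₊ / (Nat.card (G n) : NNReal) with hβ
  have hβsum : Summable β := by
    rw [← NNReal.summable_coe]
    convert hsum using 2 with n
    simp [hβ]

  have hβtop : ∑' n, (β n : ENNReal) ≠ ⊤ := ENNReal.tsum_coe_ne_top_iff_summable.mpr hβsum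
  have hlint : ∀ n, ∫⁻ x, ‖f n x‖₊ ∂νA ≤ (β n : ENNReal) := by
    intro n
    have heq : (fun x => (‖f n x‖₊ : ENNReal)) =
        Set.indicator (K n : Set _) (fun _ => (‖g n‖₊ : ENNReal)) := by
      funext x
      by_cases h : x ∈ (K n : Set _)
      · simp [hf, Set.indicator_of_mem h]
      · simp [hf, Set.indicator_of_notMem h]
    rw [heq, lintegral_indicator (hKmeas n), setLIntegral_const]
    calc (‖g n‖₊ : ENNReal) * νA (K n : Set _)
        ≤ (‖g n‖₊ : ENNReal) * (1 / (Nat.card (G n) : ENNReal)) :=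
          mul_le_mul_right (hνK n) _
      _ = (β n : ENNReal) := by
          rw [hβ, ENNReal.coe_div (hcGne n)]
          simp [one_div, div_eq_mul_inv]
  have hlintsum : ∑' n, ∫⁻ x, ‖f n x‖₊ ∂νA ≠ ⊤ :=
    (lt_of_le_of_lt (ENNReal.tsum_le_tsum hlint) (lt_of_le_of_ne le_top hβtop)).ne
  -- a.e. summability
  have hae : ∀ᵐ x ∂νA, Summable fun n => ‖f n x‖ := by
    have h1 : ∀ n, AEMeasurable (fun x => (‖f n x‖₊ : ENNReal)) νA :=
      fun n => (hfint n).aestronglyMeasurable.enorm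
    rw [← lintegral_tsum h1] at hlintsum
    refine (ae_lt_top' (AEMeasurable.ennreal_tsum h1) hlintsum).mono ?_
    intro x hx
    have := ENNReal.tsum_coe_ne_top_iff_summable.mp hx.ne
    rw [← NNReal.summable_coe] at this
    convert this using 2 with n
    exact (coe_nnnorm _).symm
  -- a.e. strong measurability of the sum
  have hFmeas : AEStronglyMeasurable (fun x => ∑' n, f n x) νA := by
    refine aestronglyMeasurable_of_tendsto_ae (Filter.atTop : Filter (Finset ℕ+))
      (f := fun s x => ∑ n ∈ s, f n x) (fun s => ?_) ?_
    · have := Finset.aestronglyMeasurable_sum s fun n _ => (hfint n).aestronglyMeasurable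
      convert this using 1
      ext x
      simp [Finset.sum_apply]
    · filter_upwards [hae] with x hx
      exact hx.of_norm.hasSum
  -- finite integral of the sum
  have hFfin : HasFiniteIntegral (fun x => ∑' n, f n x) νA := by
    rw [hasFiniteIntegral_def]
    have hb : ∀ᵐ x ∂νA, (‖∑' n, f n x‖₊ : ENNReal) ≤ ∑' n, (‖f n x‖₊ : ENNReal) := by
      filter_upwards [hae] with x hx
      have hxs : Summable fun n => ‖f n x‖₊ := by
        rw [← NNReal.summable_coe]
        convert hx using 2 with n
        exact coe_nnnorm _
      calc (‖∑' n, f n x‖₊ : ENNReal) ≤ ((∑' n, ‖f n x‖₊ : NNReal) : ENNReal) := by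
            exact_mod_cast nnnorm_tsum_le hxs
        _ = ∑' n, (‖f n x‖₊ : ENNReal) := ENNReal.coe_tsum hxs
    calc ∫⁻ x, ‖∑' n, f n x‖₊ ∂νA ≤ ∫⁻ x, ∑' n, ‖f n x‖₊ ∂νA := lintegral_mono_ae hb
      _ = ∑' n, ∫⁻ x, ‖f n x‖₊ ∂νA :=
          lintegral_tsum fun n => (hfint n).aestronglyMeasurable.enorm
      _ < ⊤ := lt_of_le_of_ne le_top hlintsum
  have hFint : Integrable (fun x => ∑' n, f n x) νA := ⟨hFmeas, hFfin⟩
  rw [hFeq]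
  refine ⟨hFint, ?_⟩
  -- |χ x| = 1
  have hχabs : ∀ x, ‖χ x‖ = 1 := by
    intro x
    have h1 : ‖χ x‖₊ ^ m = 1 := by
      rw [← nnnorm_pow, hχroot x, nnnorm_one]
    have h2 := (pow_eq_one_iff_of_nonneg (zero_le (a := ‖χ x‖₊)) (show m ≠ 0 by omega)).mp h1
    have h3 := congrArg NNReal.toReal h2
    simpa [coe_nnnorm] using h3
  have hInt : ∀ t : ℕ, Integrable (fun x => (∑' n, f n x) * χ x ^ t) νA := by
    intro t
    have h0 : Integrable (fun x => χ x ^ t * (∑' n, f n x)) νA := by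
      refine hFint.bdd_mul (c := 1) ((hχmeas.pow_const t).aestronglyMeasurable) (Filter.Eventually.of_forall fun x => ?_)
      rw [norm_pow, hχabs x, one_pow]
    simpa [mul_comm] using h0
  have hgeom : ∀ x, (∑ t ∈ Finset.range m, χ x ^ t) = if x ∈ Hc then (m : ℂ) else 0 := by
    intro x
    by_cases hx : x ∈ Hc
    · rw [if_pos hx]
      have h1 : χ x = 1 := (hχker x).mpr hx
      simp [h1]
    · rw [if_neg hx]
      have h1 : χ x ≠ 1 := fun h => hx ((hχker x).mp h)
      rw [geom_sum_eq h1, hχroot x, sub_self, zero_div]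
  -- the indicator family on S n
  have hfS : ∀ n : ℕ+, Integrable (Set.indicator (S n : Set ↥(dvdLimit A j)) (fun _ => g n)) νA :=
    fun n => (integrable_const (g n)).indicator (hSmeas n)
  have hνSreal : ∀ n : ℕ+, (νA (S n : Set ↥(dvdLimit A j))).toReal = ((Nat.card (G n) : ℝ) * m)⁻¹ := by
    intro n
    rw [hνS n, one_div, ENNReal.toReal_inv]
    simp [ENNReal.toReal_mul]
  have hfSint : ∀ n : ℕ+, ∫ x, Set.indicator (S n : Set ↥(dvdLimit A j)) (fun _ => g n) x ∂νA
      = (((Nat.card (G n) : ℝ) * m)⁻¹ : ℝ) • g n := by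
    intro n
    rw [integral_indicator_const (g n) (hSmeas n), measureReal_def, hνSreal n]
  have hfSnorm : ∀ n : ℕ+, ∫ x, ‖Set.indicator (S n : Set ↥(dvdLimit A j)) (fun _ => g n) x‖ ∂νA
      ≤ ‖g n‖ / (Nat.card (G n) : ℝ) := by
    intro n
    have heq : (fun x => ‖Set.indicator (S n : Set ↥(dvdLimit A j)) (fun _ => g n) x‖)
        = Set.indicator (S n : Set ↥(dvdLimit A j)) (fun _ => ‖g n‖) := by
      funext x
      by_cases h : x ∈ (S n : Set ↥(dvdLimit A j))
      · simp [Set.indicator_of_mem h]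
      · simp [Set.indicator_of_notMem h]
    rw [heq, integral_indicator_const _ (hSmeas n), measureReal_def, hνSreal n, smul_eq_mul]
    have hcg : (0:ℝ) < (Nat.card (G n) : ℝ) := by exact_mod_cast hcGpos n
    have hm1 : (1:ℝ) ≤ (m:ℝ) := by exact_mod_cast hm
    have h2 : ((Nat.card (G n) : ℝ) * m)⁻¹ ≤ (Nat.card (G n) : ℝ)⁻¹ := by
      apply inv_anti₀ hcg
      nlinarith
    calc ((Nat.card (G n):ℝ)*m)⁻¹ * ‖g n‖ ≤ (Nat.card (G n):ℝ)⁻¹ * ‖g n‖ :=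
        mul_le_mul_of_nonneg_right h2 (norm_nonneg _)
      _ = ‖g n‖ / (Nat.card (G n):ℝ) := by
        ring
  have hfSsum : Summable (fun n : ℕ+ => ∫ x, ‖Set.indicator (S n : Set ↥(dvdLimit A j)) (fun _ => g n) x‖ ∂νA) :=
    Summable.of_nonneg_of_le (fun n => integral_nonneg fun x => norm_nonneg _) hfSnorm hsum
  calc ∑' n : ℕ+, g n / (Nat.card (G n) : ℂ)
      = (m:ℂ) * ∑' n : ℕ+, (((Nat.card (G n) : ℝ) * m)⁻¹ : ℝ) • g n := by
        rw [← tsum_mul_left]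
        refine tsum_congr fun n => ?_
        have hcg : ((Nat.card (G n) : ℂ)) ≠ 0 := by
          exact_mod_cast (hcGpos n).ne'
        have hmne : ((m:ℂ)) ≠ 0 := by
          exact_mod_cast (show m ≠ 0 by omega)
        rw [Complex.real_smul]
        push_cast
        field_simp
    _ = (m:ℂ) * ∑' n : ℕ+, ∫ x, Set.indicator (S n : Set ↥(dvdLimit A j)) (fun _ => g n) x ∂νA := by
        congr 1
        exact tsum_congr fun n => (hfSint n).symm
    _ = (m:ℂ) * ∫ x, ∑' n : ℕ+, Set.indicator (S n : Set ↥(dvdLimit A j)) (fun _ => g n) x ∂νA := by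
        congr 1
        exact integral_tsum_of_summable_integral_norm hfS hfSsum
    _ = ∫ x, (m:ℂ) * (∑' n : ℕ+, Set.indicator (S n : Set ↥(dvdLimit A j)) (fun _ => g n) x) ∂νA :=
        (integral_const_mul _ _).symm
    _ = ∫ x, ∑ t ∈ Finset.range m, (∑' n, f n x) * χ x ^ t ∂νA := by
        congr 1; funext x
        rw [← Finset.mul_sum, hgeom x]
        by_cases hx : x ∈ Hc
        · rw [if_pos hx, mul_comm ((∑' n, f n x)) ((m:ℂ))]
          congr 1
          refine tsum_congr fun n => ?_
          by_cases hk : x ∈ K n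
          · have hmem : x ∈ (S n : Set ↥(dvdLimit A j)) := by
              show x ∈ Hc ⊓ K n
              exact Subgroup.mem_inf.mpr ⟨hx, hk⟩
            rw [Set.indicator_of_mem hmem]
            simp only [hf]
            rw [Set.indicator_of_mem hk]
          · have hmem : x ∉ (S n : Set ↥(dvdLimit A j)) := by
              intro hmem
              have : x ∈ Hc ⊓ K n := hmem
              exact hk (Subgroup.mem_inf.mp this).2
            rw [Set.indicator_of_notMem hmem]
            simp only [hf]
            rw [Set.indicator_of_notMem (fun h => hk h)]
        · rw [if_neg hx, mul_zero]
          have hzero : ∀ n : ℕ+, Set.indicator (S n : Set ↥(dvdLimit A j)) (fun _ => g n) x = 0 := by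
            intro n
            refine Set.indicator_of_notMem ?_ _
            intro hmem
            have : x ∈ Hc ⊓ K n := hmem
            exact hx (Subgroup.mem_inf.mp this).1
          rw [tsum_congr hzero, tsum_zero, mul_zero]
    _ = ∑ t ∈ Finset.range m, ∫ x, (∑' n, f n x) * χ x ^ t ∂νA :=
        integral_finset_sum _ (fun t _ => hInt t)
    _ = ∑ t ∈ Finset.range m,
        ∫ x, (∑' n : ℕ+, if (x : ∀ n', A n') n = 1 then g n else 0) * χ x ^ t ∂νA := by
        refine Finset.sum_congr rfl fun t _ => ?_
        congr 1
        funext x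
        exact congrArg (· * χ x ^ t) (tsum_congr fun n => (hfeq x n)).symm
end

section
/- Suppose p is an odd prime, or p = 2 and (e is odd or a > 0). Then for every k ≥ 1 the group A(p^k) is isomorphic to the group of matrices { (1 0; b d) : b ∈ ℤ/p^kℤ, d ∈ (ℤ/p^kℤ)^×, b + 1 ≡ d (mod p^{min(k, ν_p(e))}) } under matrix multiplication. -/
noncomputable section

abbrev Qbar : Type := AlgebraicClosure ℚ

/-- `a` as a unit of `Q̄`. -/
def aUnit (a : ℤ) (ha : a ≠ 0) : Qbarˣ :=
  Units.mk0 (a : Qbar) (by exact_mod_cast ha)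

/-- `R_n = {α ∈ Q̄^× : α^n ∈ ⟨a⟩}`, the group of `n`-radicals of `a`. -/
def radical (a : ℤ) (ha : a ≠ 0) (n : ℕ) : Subgroup Qbarˣ :=
  Subgroup.comap (powMonoidHom n) (Subgroup.zpowers (aUnit a ha))

/-- `A(n)`: the group of automorphisms of `R_n` fixing every element of `ℚ^× ∩ R_n`. -/
def autGroup (a : ℤ) (ha : a ≠ 0) (n : ℕ) : Subgroup (MulAut ↥(radical a ha n)) where
  carrier := {f | ∀ x : ↥(radical a ha n),
    ((x : Qbarˣ) : Qbar) ∈ Set.range (algebraMap ℚ Qbar) → f x = x}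
  one_mem' := by intro x _; rfl
  mul_mem' := by
    intro f g hf hg x hx
    have h1 : g x = x := hg x hx
    have h2 : f x = x := hf x hx
    show f (g x) = x
    rw [h1, h2]
  inv_mem' := by
    intro f hf x hx
    have h2 : f x = x := hf x hx
    calc f⁻¹ x = f⁻¹ (f x) := by rw [h2]
    _ = x := by simp

/-- The group of matrices `(1 0; b d)` with `b ∈ ℤ/Nℤ`, `d ∈ (ℤ/Nℤ)^×` and
`t·b + 1 ≡ d (mod m)`, under matrix multiplication. -/
def matGroup (N m t : ℕ) (h : m ∣ N) : Submonoid (Matrix (Fin 2) (Fin 2) (ZMod N)) where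
  carrier := {A | A 0 0 = 1 ∧ A 0 1 = 0 ∧ IsUnit (A 1 1) ∧
    ZMod.castHom h (ZMod m) ((t : ZMod N) * A 1 0 + 1) =
      ZMod.castHom h (ZMod m) (A 1 1)}
  one_mem' := ⟨by simp, by simp, by simp, by simp⟩
  mul_mem' := by
    rintro A B ⟨hA00, hA01, hA11, hAc⟩ ⟨hB00, hB01, hB11, hBc⟩
    refine ⟨?_, ?_, ?_, ?_⟩
    · simp [Matrix.mul_apply, Fin.sum_univ_two, hA00, hA01, hB00]
    · simp [Matrix.mul_apply, Fin.sum_univ_two, hA00, hA01, hB01]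
    · simpa [Matrix.mul_apply, Fin.sum_univ_two, hB01] using hA11.mul hB11
    · simp only [Matrix.mul_apply, Fin.sum_univ_two, hB00, hB01, map_add, map_mul,
        map_one, map_natCast, mul_one, mul_zero, zero_add, add_zero] at hAc hBc ⊢
      rw [← hAc, ← hBc]
      ring


theorem abstract_iso (a : ℤ) (ha : a ≠ 0) (ha2 : 1 < |a|) (N M : ℕ) (hM : M ∣ N) (hN : 0 < N)
    (ζ α : Qbarˣ) (hζ : IsPrimitiveRoot ζ N) (hα : α ^ N = aUnit a ha)
    (rU : Qbarˣ) (hrQ : (rU : Qbar) ∈ Set.range (algebraMap ℚ Qbar))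
    (hrα : rU = (ζ⁻¹ * α) ^ (N / M))
    (hQ : ∀ x : Qbarˣ, x ∈ radical a ha N → ((x : Qbar) ∈ Set.range (algebraMap ℚ Qbar)) →
      ∃ s : ℤ, x = rU ^ s ∨ x = -rU ^ s) :
    Nonempty (↥(autGroup a ha N) ≃* ↥(matGroup N M 1 hM)) := by
  classical
  haveI : NeZero N := ⟨hN.ne'⟩
  haveI : CharZero Qbar := charZero_of_injective_algebraMap (algebraMap ℚ Qbar).injective
  set A : Qbarˣ := aUnit a ha with hAdef
  set R := radical a ha N with hRdef
  have hAQ : (A : Qbar) = algebraMap ℚ Qbar (a : ℚ) := by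
    simp [hAdef, aUnit]
  have hQinj := (algebraMap ℚ Qbar).injective
  have hAinj : ∀ m : ℤ, A ^ m = 1 → m = 0 := by
    intro m hm
    have h1 : ((A : Qbar)) ^ m = 1 := by
      rw [← Units.val_zpow_eq_zpow_val, hm, Units.val_one]
    rw [hAQ, ← map_zpow₀, show (1:Qbar) = algebraMap ℚ Qbar 1 from (map_one _).symm] at h1
    have h2 : ((a:ℚ)) ^ m = 1 := hQinj h1
    -- now the rational argument
    have hb : (1:ℚ) < |(a:ℚ)| := by rw [← Int.cast_abs]; exact_mod_cast ha2
    have key : ∀ (x : ℚ) (j : ℤ), |x ^ j| = |x| ^ j := by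
      intro x j
      rcases j.eq_nat_or_neg with ⟨n, rfl | rfl⟩ <;>
        simp [zpow_natCast, abs_pow, zpow_neg, abs_inv]
    have habs : |(a:ℚ)| ^ m = 1 := by rw [← key, h2, abs_one]
    by_contra h
    have hgt : ∀ j : ℤ, 0 < j → 1 < |(a:ℚ)| ^ j := by
      intro j hj
      obtain ⟨n, rfl⟩ : ∃ n : ℕ, j = (n:ℤ) := ⟨j.toNat, (Int.toNat_of_nonneg hj.le).symm⟩
      rw [zpow_natCast]
      exact one_lt_pow₀ hb (by exact_mod_cast hj.ne')
    rcases lt_trichotomy m 0 with hlt | rfl | hgt'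
    · have := hgt (-m) (by omega)
      rw [zpow_neg, habs, inv_one] at this; exact lt_irrefl _ this
    · exact h rfl
    · have := hgt m hgt'
      rw [habs] at this; exact lt_irrefl _ this
  have hmem : ∀ x : Qbarˣ, x ∈ R ↔ ∃ m : ℤ, x ^ N = A ^ m := by
    intro x
    constructor
    · intro hx
      obtain ⟨m, hm⟩ := Subgroup.mem_zpowers_iff.mp (Subgroup.mem_comap.mp hx)
      exact ⟨m, hm.symm⟩
    · rintro ⟨m, hm⟩
      exact Subgroup.mem_comap.mpr (Subgroup.mem_zpowers_iff.mpr ⟨m, hm.symm⟩)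
  have powf : ∀ (i m : ℤ), (ζ ^ i * α ^ m) ^ N = A ^ m := by
    intro i m
    have h1 : (ζ ^ i) ^ N = 1 := by
      rw [← zpow_natCast (ζ ^ i), ← zpow_mul, mul_comm, zpow_mul, zpow_natCast,
        hζ.pow_eq_one, one_zpow]
    have h2 : (α ^ m) ^ N = A ^ m := by
      rw [← zpow_natCast (α ^ m), ← zpow_mul, mul_comm, zpow_mul, zpow_natCast, hα]
    rw [mul_pow, h1, h2, one_mul]
  have hζdvd : ∀ i : ℤ, ζ ^ i = 1 ↔ (N:ℤ) ∣ i := fun i => hζ.zpow_eq_one_iff_dvd i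
  have hdlog : ∀ x : Qbarˣ, x ^ N = 1 → ∃ i : ℤ, ζ ^ i = x := by
    intro x hx
    have : x ∈ Subgroup.zpowers ζ := by
      rw [hζ.zpowers_eq]; exact (mem_rootsOfUnity N x).mpr hx
    exact Subgroup.mem_zpowers_iff.mp this
  have zmcongr : ∀ i j : ℤ, (i : ZMod N) = (j : ZMod N) → ζ ^ i = ζ ^ j := by
    intro i j h
    rw [ZMod.intCast_eq_intCast_iff] at h
    have h1 : ζ ^ (i - j) = 1 := (hζdvd _).mpr (Int.ModEq.dvd h.symm)
    calc ζ ^ i = ζ ^ (i - j) * ζ ^ j := by rw [← zpow_add, sub_add_cancel]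
    _ = ζ ^ j := by rw [h1, one_mul]
  set zm : ZMod N → Qbarˣ := fun c => ζ ^ ((c.val : ℤ)) with hzm
  have zm_int : ∀ i : ℤ, zm (i : ZMod N) = ζ ^ i := by
    intro i
    apply zmcongr
    push_cast
    rw [ZMod.natCast_val, ZMod.cast_id]
  have zm_inj : ∀ c c' : ZMod N, zm c = zm c' → c = c' := by
    intro c c' h
    have h' : ζ ^ ((c.val:ℤ)) = ζ ^ ((c'.val:ℤ)) := h
    have h2 : ζ ^ ((c.val:ℤ) - (c'.val:ℤ)) = 1 := by
      rw [zpow_sub, h', mul_inv_cancel]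
    have h3 := (hζdvd _).mp h2
    have h4 : ((c.val:ℤ) : ZMod N) = ((c'.val:ℤ) : ZMod N) := by
      rw [ZMod.intCast_eq_intCast_iff]
      exact Int.ModEq.symm (Int.modEq_iff_dvd.mpr h3)
    have h5 : ((c.val:ℤ) : ZMod N) = c := by push_cast; rw [ZMod.natCast_val, ZMod.cast_id]
    have h6 : ((c'.val:ℤ) : ZMod N) = c' := by push_cast; rw [ZMod.natCast_val, ZMod.cast_id]
    rw [h5, h6] at h4; exact h4
  have zm_self : ∀ c : ZMod N, ((c.val:ℤ) : ZMod N) = c := by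
    intro c; push_cast; rw [ZMod.natCast_val, ZMod.cast_id]
  have zm_mul : ∀ c c' : ZMod N, zm (c + c') = zm c * zm c' := by
    intro c c'
    have e1 : zm c = ζ ^ ((c.val:ℤ)) := rfl
    have e2 : zm c' = ζ ^ ((c'.val:ℤ)) := rfl
    have e3 : zm (c + c') = ζ ^ ((c.val:ℤ) + (c'.val:ℤ)) := by
      rw [← zm_int]
      congr 1
      push_cast [zm_self]
      rfl
    rw [e1, e2, e3, zpow_add]
  have powf' : ∀ (c : ZMod N) (m : ℤ), (zm c * α ^ m) ^ N = A ^ m := fun c m => powf _ m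
  have memR : ∀ (c : ZMod N) (m : ℤ), zm c * α ^ m ∈ R := by
    intro c m; exact (hmem _).mpr ⟨m, powf' c m⟩
  have decomp : ∀ x : Qbarˣ, x ∈ R → ∃ (c : ZMod N) (m : ℤ), x = zm c * α ^ m := by
    intro x hx
    obtain ⟨m, hm⟩ := (hmem x).mp hx
    have hαm : (α ^ (-m)) ^ N = A ^ (-m) := by
      rw [← zpow_natCast (α ^ (-m)), ← zpow_mul, mul_comm, zpow_mul, zpow_natCast, hα]
    have ht : (x * α ^ (-m)) ^ N = 1 := by
      rw [mul_pow, hm, hαm, ← zpow_add, add_neg_cancel, zpow_zero]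
    obtain ⟨i, hi⟩ := hdlog _ ht
    refine ⟨(i : ZMod N), m, ?_⟩
    rw [zm_int, hi, mul_assoc, ← zpow_add, neg_add_cancel, zpow_zero, mul_one]
  have uniq : ∀ (c c' : ZMod N) (m m' : ℤ), zm c * α ^ m = zm c' * α ^ m' → c = c' ∧ m = m' := by
    intro c c' m m' h
    have hm : m = m' := by
      have h1 : A ^ m = A ^ m' := by
        rw [← powf' c m, ← powf' c' m', h]
      have h2 : A ^ (m - m') = 1 := by rw [zpow_sub, h1, mul_inv_cancel]
      have := hAinj _ h2; omega
    subst hm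
    exact ⟨zm_inj _ _ (mul_right_cancel h), rfl⟩
  have decompT : ∀ x : Qbarˣ, ∃ (c : ZMod N) (m : ℤ), x ∈ R → x = zm c * α ^ m := by
    intro x
    by_cases hx : x ∈ R
    · obtain ⟨c, m, h⟩ := decomp x hx; exact ⟨c, m, fun _ => h⟩
    · exact ⟨0, 0, fun h => absurd h hx⟩
  choose Cf Mf hCM using decompT
  have coordC : ∀ (x : Qbarˣ) (hx : x ∈ R) (c : ZMod N) (m : ℤ), x = zm c * α ^ m →
      Cf x = c ∧ Mf x = m := by
    intro x hx c m h
    exact uniq _ _ _ _ ((hCM x hx).symm.trans h)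
  -- distinguished elements
  have hζR : ζ ∈ R := (hmem ζ).mpr ⟨0, by rw [hζ.pow_eq_one, zpow_zero]⟩
  have hαR : α ∈ R := (hmem α).mpr ⟨1, by rw [hα, zpow_one]⟩
  have hAR : A ∈ R := (hmem A).mpr ⟨(N:ℤ), by rw [zpow_natCast]⟩
  set ζR : R := ⟨ζ, hζR⟩ with hζRdef
  set αR : R := ⟨α, hαR⟩ with hαRdef
  set q : ℕ := N / M with hqdef
  have hMq : M * q = N := Nat.mul_div_cancel' hM
  haveI : NeZero M := ⟨by rintro rfl; simp at hMq; omega⟩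
  have qpos : 0 < q := by
    rcases Nat.eq_zero_or_pos q with h | h
    · rw [h, Nat.mul_zero] at hMq; omega
    · exact h
  have hrU : rU = zm ((-(q:ℤ) : ℤ) : ZMod N) * α ^ ((q:ℕ) : ℤ) := by
    rw [zm_int, hrα, mul_pow, inv_pow, ← zpow_natCast ζ, ← zpow_natCast α, ← zpow_neg]
  have hrUR : rU ∈ R := hrU ▸ memR _ _
  set rR : R := ⟨rU, hrUR⟩ with hrRdef
  -- cast bridge
  have castc : ∀ β : ZMod N, ZMod.castHom hM (ZMod M) β = 0 ↔ β * ((q:ℕ) : ZMod N) = 0 := by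
    intro β
    have h1 : (ZMod.castHom hM (ZMod M) β) = ((β.val : ℕ) : ZMod M) := by
      rw [ZMod.castHom_apply, ← ZMod.natCast_val]
    rw [h1, ZMod.natCast_eq_zero_iff]
    constructor
    · rintro ⟨t, ht⟩
      have hβ : β = ((β.val : ℕ) : ZMod N) := by rw [ZMod.natCast_val, ZMod.cast_id]
      rw [hβ, ht]
      calc ((M*t : ℕ) : ZMod N) * ((q:ℕ) : ZMod N) = ((t*N : ℕ) : ZMod N) := by
            push_cast
            rw [show (M:ZMod N)*t*q = t*((M:ZMod N)*q) by ring]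
            congr 1
            rw [show ((M:ZMod N))*(q:ZMod N) = ((M*q : ℕ) : ZMod N) by push_cast; ring, hMq]
      _ = 0 := by push_cast; simp
    · intro h
      have h2 : ((β.val * q : ℕ) : ZMod N) = 0 := by
        push_cast
        rw [ZMod.natCast_val, ZMod.cast_id]
        exact h
      have h3 : N ∣ β.val * q := (ZMod.natCast_eq_zero_iff _ _).mp h2
      have h4 : M * q ∣ β.val * q := by rw [hMq]; exact h3
      exact (Nat.mul_dvd_mul_iff_right qpos).mp h4
  -- the raw automorphism maps
  set Fraw : ZMod N → ZMod N → ↥R → ↥R := fun b d x =>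
    ⟨zm (d * Cf (x:Qbarˣ) + b * ((Mf (x:Qbarˣ) : ℤ) : ZMod N)) * α ^ Mf (x:Qbarˣ),
      memR _ _⟩ with hFrawdef
  have Fapp : ∀ (b d : ZMod N) (x : ↥R) (c : ZMod N) (m : ℤ), (x:Qbarˣ) = zm c * α ^ m →
      ((Fraw b d x : Qbarˣ)) = zm (d * c + b * ((m : ℤ) : ZMod N)) * α ^ m := by
    intro b d x c m h
    obtain ⟨h1, h2⟩ := coordC _ x.2 c m h
    simp only [hFrawdef, h1, h2]
  have Fmul : ∀ (b d : ZMod N) (x y : ↥R), Fraw b d (x * y) = Fraw b d x * Fraw b d y := by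
    intro b d x y
    have hx := hCM (x:Qbarˣ) x.2
    have hy := hCM (y:Qbarˣ) y.2
    have hxy : ((x*y : ↥R) : Qbarˣ) =
        zm (Cf (x:Qbarˣ) + Cf (y:Qbarˣ)) * α ^ (Mf (x:Qbarˣ) + Mf (y:Qbarˣ)) := by
      push_cast
      rw [zm_mul, zpow_add]
      calc (x:Qbarˣ) * (y:Qbarˣ)
          = (zm (Cf (x:Qbarˣ)) * α ^ Mf (x:Qbarˣ)) * (zm (Cf (y:Qbarˣ)) * α ^ Mf (y:Qbarˣ)) := by
            rw [← hx, ← hy]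
      _ = _ := by rw [mul_mul_mul_comm]
    apply Subtype.ext
    rw [Fapp b d _ _ _ hxy]
    have hrhs : ((Fraw b d x * Fraw b d y : ↥R) : Qbarˣ) =
        (zm (d * Cf (x:Qbarˣ) + b * ((Mf (x:Qbarˣ) : ℤ) : ZMod N)) * α ^ Mf (x:Qbarˣ)) *
        (zm (d * Cf (y:Qbarˣ) + b * ((Mf (y:Qbarˣ) : ℤ) : ZMod N)) * α ^ Mf (y:Qbarˣ)) := by
      push_cast
      rfl
    rw [hrhs, mul_mul_mul_comm, ← zm_mul, ← zpow_add]
    congr 2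
    push_cast
    ring
  have Fcomp : ∀ (b d b' d' : ZMod N) (x : ↥R),
      Fraw b d (Fraw b' d' x) = Fraw (b + d * b') (d * d') x := by
    intro b d b' d' x
    apply Subtype.ext
    rw [Fapp _ _ _ _ _ (Fapp b' d' x _ _ (hCM _ x.2)), Fapp _ _ x _ _ (hCM _ x.2)]
    congr 2
    ring
  have Fid : ∀ x : ↥R, Fraw 0 1 x = x := by
    intro x
    apply Subtype.ext
    rw [Fapp _ _ x _ _ (hCM _ x.2), one_mul, zero_mul, add_zero]
    exact (hCM _ x.2).symm
  -- rationality of a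
  have hArat : ((A : Qbarˣ) : Qbar) ∈ Set.range (algebraMap ℚ Qbar) := ⟨(a:ℚ), hAQ.symm⟩
  have negOne_coord : (-1 : Qbarˣ) ∈ R →
      ∃ c₁ : ZMod N, ((-1 : Qbarˣ) = zm c₁ * α ^ (0:ℤ)) ∧ 2 * c₁ = 0 ∧ Even N := by
    intro hm1
    obtain ⟨m, hm⟩ := (hmem _).mp hm1
    have hne : (-1 : Qbarˣ) ≠ 1 := by
      intro h
      have h2 := congrArg (Units.val) h
      simp only [Units.val_neg, Units.val_one] at h2
      exact (by norm_num : ((-1 : Qbar)) ≠ 1) h2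
    have hsq : ∀ u : Qbarˣ, u = -1 → u ^ (2:ℤ) = 1 := by
      rintro u rfl
      rw [show ((2:ℤ)) = ((2:ℕ):ℤ) by norm_num, zpow_natCast, neg_one_sq]
    have hNE : Even N ∧ ((-1 : Qbarˣ)) ^ N = 1 := by
      rcases Nat.even_or_odd N with hE | hO
      · exact ⟨hE, hE.neg_one_pow⟩
      · exfalso
        rw [hO.neg_one_pow] at hm
        have h2 : A ^ (m * 2) = 1 := by
          rw [zpow_mul, ← hm]
          exact hsq _ rfl
        have := hAinj _ h2
        have hm0 : m = 0 := by omega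
        rw [hm0, zpow_zero] at hm
        exact hne hm
    obtain ⟨i, hi⟩ := hdlog _ hNE.2
    refine ⟨(i : ZMod N), by rw [zm_int, hi, zpow_zero, mul_one], ?_, hNE.1⟩
    have h2 : ζ ^ (i * 2) = 1 := by
      rw [zpow_mul, hi]
      exact hsq _ rfl
    have h3 := (hζdvd _).mp h2
    have h4 : ((i * 2 : ℤ) : ZMod N) = ((0:ℤ) : ZMod N) := by
      rw [ZMod.intCast_eq_intCast_iff]
      exact Int.ModEq.symm ((Int.modEq_iff_dvd).mpr (by simpa using h3))
    push_cast at h4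
    linear_combination h4
  have negOne_fix : ∀ (d c₁ : ZMod N), IsUnit d → 2 * c₁ = 0 → Even N → d * c₁ = c₁ := by
    intro d c₁ hd h2 hE
    obtain ⟨u, hu⟩ := hd
    have hco : (d.val).Coprime N := by rw [← hu]; exact ZMod.val_coe_unit_coprime u
    have hodd : d.val % 2 = 1 := by
      rcases Nat.even_or_odd d.val with he | ho
      · exfalso
        obtain ⟨w, hw⟩ := he
        obtain ⟨N2, hN2⟩ := hE
        have hg : 2 ∣ Nat.gcd d.val N := Nat.dvd_gcd ⟨w, by omega⟩ ⟨N2, by omega⟩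
        rw [Nat.Coprime] at hco
        rw [hco] at hg
        norm_num at hg
      · exact Nat.odd_iff.mp ho
    obtain ⟨t, ht⟩ : ∃ t, d.val = 2*t + 1 := ⟨d.val / 2, by omega⟩
    have hd1 : d = ((2*t+1 : ℕ) : ZMod N) := by rw [← ht, ZMod.natCast_val, ZMod.cast_id]
    rw [hd1]
    push_cast
    linear_combination (t : ZMod N) * h2
  have mem_aut : ∀ (b d : ZMod N), IsUnit d →
      (ZMod.castHom hM (ZMod M) ((1:ZMod N) * b + 1) = ZMod.castHom hM (ZMod M) d) →
      ∀ (F : MulAut ↥R), (∀ x : ↥R, F x = Fraw b d x) →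
      ∀ x : ↥R, ((x : Qbarˣ) : Qbar) ∈ Set.range (algebraMap ℚ Qbar) → F x = x := by
    intro b d hd hcong F hF x hxrat
    have key : (b + 1 - d) * ((q:ℕ) : ZMod N) = 0 := by
      apply (castc _).mp
      rw [one_mul] at hcong
      rw [map_sub, hcong, sub_self]
    have fixrR : F rR = rR := by
      rw [hF]
      apply Subtype.ext
      rw [Fapp _ _ _ _ _ (show (rR : Qbarˣ) = zm ((-(q:ℤ) : ℤ) : ZMod N) * α ^ ((q:ℕ) : ℤ) from hrU)]
      show _ = rU
      rw [hrU]
      congr 1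
      apply congrArg
      push_cast
      linear_combination key
    obtain ⟨s, hs | hs⟩ := hQ (x:Qbarˣ) x.2 hxrat
    · have hx : x = rR ^ s := Subtype.ext (by push_cast; exact hs)
      rw [hx, map_zpow, fixrR]
    · have hm1 : (-1 : Qbarˣ) ∈ R := by
        have h1 : (-1 : Qbarˣ) = (x:Qbarˣ) * (rU ^ s)⁻¹ := by
          rw [hs, neg_mul, mul_inv_cancel]
        rw [h1]
        exact mul_mem x.2 (inv_mem (zpow_mem hrUR s))
      obtain ⟨c₁, hc₁, h2c, hNe⟩ := negOne_coord hm1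
      have hx : x = (⟨-1, hm1⟩ : ↥R) * rR ^ s := by
        apply Subtype.ext
        push_cast
        rw [hs]
        exact (neg_one_mul _).symm
      rw [hx, map_mul, map_zpow, fixrR]
      congr 1
      rw [hF]
      apply Subtype.ext
      rw [Fapp _ _ _ _ _ (show ((⟨-1,hm1⟩ : ↥R) : Qbarˣ) = zm c₁ * α ^ (0:ℤ) from hc₁)]
      show _ = (-1 : Qbarˣ)
      rw [hc₁]
      congr 1
      apply congrArg
      rw [Int.cast_zero, mul_zero, add_zero, negOne_fix d c₁ hd h2c hNe]
  -- coordinates of distinguished elements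
  have hζdec : (ζ : Qbarˣ) = zm ((1:ℤ) : ZMod N) * α ^ (0:ℤ) := by
    rw [zm_int, zpow_one, zpow_zero, mul_one]
  have hαdec : (α : Qbarˣ) = zm ((0:ℤ) : ZMod N) * α ^ (1:ℤ) := by
    rw [zm_int, zpow_zero, one_mul, zpow_one]
  have himgζ : ∀ F : MulAut ↥R, ∃ i : ℤ, ((F ζR : ↥R) : Qbarˣ) = ζ ^ i := by
    intro F
    have h1 : ζR ^ N = 1 := by
      apply Subtype.ext
      push_cast
      exact hζ.pow_eq_one
    have h2 : (((F ζR : ↥R)) : Qbarˣ) ^ N = 1 := by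
      have h3 : F ζR ^ N = 1 := by rw [← map_pow, h1, map_one]
      calc (((F ζR : ↥R)) : Qbarˣ) ^ N = ((F ζR ^ N : ↥R) : Qbarˣ) := by push_cast; rfl
      _ = 1 := by rw [h3]; rfl
    obtain ⟨i, hi⟩ := hdlog _ h2
    exact ⟨i, hi.symm⟩
  have himgα : ∀ F : MulAut ↥R,
      (∀ x : ↥R, ((x : Qbarˣ) : Qbar) ∈ Set.range (algebraMap ℚ Qbar) → F x = x) →
      ((F αR : ↥R) : Qbarˣ) = zm (Cf (((F αR : ↥R)) : Qbarˣ)) * α ^ (1:ℤ) := by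
    intro F hfix
    have hARfix : F ⟨A, hAR⟩ = ⟨A, hAR⟩ := hfix _ hArat
    have hARα : (⟨A, hAR⟩ : ↥R) = αR ^ N := by
      apply Subtype.ext; push_cast; exact hα.symm
    have h1 : (((F αR : ↥R)) : Qbarˣ) ^ N = A := by
      calc (((F αR : ↥R)) : Qbarˣ) ^ N = ((F αR ^ N : ↥R) : Qbarˣ) := by push_cast; rfl
      _ = ((F (αR ^ N) : ↥R) : Qbarˣ) := by rw [map_pow]
      _ = A := by rw [← hARα, hARfix]
    have hd := hCM _ (F αR).2
    have hm1 : Mf (((F αR : ↥R)) : Qbarˣ) = 1 := by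
      have e1 : (((F αR : ↥R)) : Qbarˣ) ^ N = A ^ (Mf (((F αR : ↥R)) : Qbarˣ)) := by
        conv_lhs => rw [hd]
        exact powf' _ _
      have e2 : A ^ (Mf (((F αR : ↥R)) : Qbarˣ) - 1) = 1 := by
        rw [zpow_sub, ← e1, h1, zpow_one, mul_inv_cancel]
      have := hAinj _ e2; omega
    rw [← hm1]
    exact hd
  have hdunit : ∀ (F : MulAut ↥R) (i i' : ℤ), ((F ζR : ↥R) : Qbarˣ) = ζ ^ i →
      ((F.symm ζR : ↥R) : Qbarˣ) = ζ ^ i' → (i : ZMod N) * (i' : ZMod N) = 1 := by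
    intro F i i' hi hi'
    have h1 : F.symm ζR = ζR ^ i' := by
      apply Subtype.ext; push_cast; exact hi'
    have h2 : ζR = F (ζR ^ i') := by rw [← h1, MulEquiv.apply_symm_apply]
    have h3 : (ζ : Qbarˣ) = ζ ^ (i * i') := by
      have h4 : ((ζR : ↥R) : Qbarˣ) = ((F (ζR ^ i') : ↥R) : Qbarˣ) := by rw [← h2]
      rw [map_zpow] at h4
      have h5 : ((F ζR ^ (i' : ℤ) : ↥R) : Qbarˣ) = (((F ζR : ↥R) : Qbarˣ)) ^ i' := by
        push_cast; rfl
      rw [h5, hi, ← zpow_mul] at h4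
      exact h4
    have h6 : ζ ^ (i * i' - 1) = 1 := by
      rw [zpow_sub, ← h3, zpow_one, mul_inv_cancel]
    have h7 := (hζdvd _).mp h6
    have h8 : ((i * i' : ℤ) : ZMod N) = ((1:ℤ) : ZMod N) := by
      rw [ZMod.intCast_eq_intCast_iff]
      exact Int.ModEq.symm ((Int.modEq_iff_dvd).mpr (by simpa using h7))
    push_cast at h8
    exact h8
  -- any automorphism is determined by its values on ζR and αR
  have happly : ∀ (F : MulAut ↥R) (i : ℤ), ((F ζR : ↥R) : Qbarˣ) = ζ ^ i →
      ((F αR : ↥R) : Qbarˣ) = zm (Cf (((F αR : ↥R)) : Qbarˣ)) * α ^ (1:ℤ) →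
      ∀ x : ↥R, F x = Fraw (Cf (((F αR : ↥R)) : Qbarˣ)) ((i : ZMod N)) x := by
    intro F i hi hb x
    set b := Cf (((F αR : ↥R)) : Qbarˣ) with hbdef
    have hxd := hCM ((x : Qbarˣ)) x.2
    have hxR : x = ζR ^ (((Cf (x:Qbarˣ)).val : ℤ)) * αR ^ (Mf (x:Qbarˣ)) := by
      apply Subtype.ext
      push_cast
      exact hxd
    apply Subtype.ext
    rw [Fapp _ _ x _ _ hxd]
    have hFx : ((F x : ↥R) : Qbarˣ) =
        (((F ζR : ↥R) : Qbarˣ)) ^ (((Cf (x:Qbarˣ)).val : ℤ)) *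
        (((F αR : ↥R) : Qbarˣ)) ^ (Mf (x:Qbarˣ)) := by
      conv_lhs => rw [hxR]
      rw [map_mul, map_zpow, map_zpow]
      push_cast
      rfl
    rw [hFx]
    have e1 : (((F ζR : ↥R) : Qbarˣ)) ^ (((Cf (x:Qbarˣ)).val : ℤ)) =
        zm (((i : ZMod N)) * Cf (x:Qbarˣ)) := by
      rw [hi, ← zpow_mul, ← zm_int]
      congr 1
      push_cast [zm_self]
      ring
    have e2 : (((F αR : ↥R) : Qbarˣ)) ^ (Mf (x:Qbarˣ)) =
        zm (b * ((Mf (x:Qbarˣ) : ℤ) : ZMod N)) * α ^ (Mf (x:Qbarˣ)) := by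
      rw [hb, zpow_one, mul_zpow]
      congr 1
      have e3 : (zm b) ^ (Mf (x:Qbarˣ)) = ζ ^ ((b.val : ℤ) * Mf (x:Qbarˣ)) := by
        rw [← zpow_mul]
      rw [e3, ← zm_int]
      congr 1
      push_cast [zm_self]
      ring
    rw [e1, e2, ← mul_assoc, ← zm_mul]
  -- membership unfoldings
  have matmem : ∀ A : Matrix (Fin 2) (Fin 2) (ZMod N), A ∈ matGroup N M 1 hM ↔
      (A 0 0 = 1 ∧ A 0 1 = 0 ∧ IsUnit (A 1 1) ∧
        ZMod.castHom hM (ZMod M) ((1 : ZMod N) * A 1 0 + 1) =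
          ZMod.castHom hM (ZMod M) (A 1 1)) := by
    intro A
    have base : A ∈ matGroup N M 1 hM ↔ (A 0 0 = 1 ∧ A 0 1 = 0 ∧ IsUnit (A 1 1) ∧
        ZMod.castHom hM (ZMod M) ((((1:ℕ)) : ZMod N) * A 1 0 + 1) =
          ZMod.castHom hM (ZMod M) (A 1 1)) := ⟨fun h => h, fun h => h⟩
    rw [base, Nat.cast_one]
  have autmem : ∀ f : MulAut ↥R, f ∈ autGroup a ha N ↔
      (∀ x : ↥R, ((x : Qbarˣ) : Qbar) ∈ Set.range (algebraMap ℚ Qbar) → f x = x) :=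
    fun _ => ⟨fun h => h, fun h => h⟩
  -- inverses
  have Finv1 : ∀ (b d : ZMod N), IsUnit d → ∀ x : ↥R, Fraw b d (Fraw (-(d⁻¹ * b)) (d⁻¹) x) = x := by
    intro b d hd x
    rw [Fcomp]
    have h1 : d * d⁻¹ = 1 := ZMod.mul_inv_of_unit d hd
    have h2 : b + d * (-(d⁻¹ * b)) = 0 := by
      rw [mul_neg, ← mul_assoc, h1, one_mul, add_neg_cancel]
    rw [h2, h1, Fid]
  have Finv2 : ∀ (b d : ZMod N), IsUnit d → ∀ x : ↥R, Fraw (-(d⁻¹ * b)) (d⁻¹) (Fraw b d x) = x := by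
    intro b d hd x
    rw [Fcomp]
    have h1 : d⁻¹ * d = 1 := ZMod.inv_mul_of_unit d hd
    have h2 : -(d⁻¹ * b) + d⁻¹ * b = 0 := neg_add_cancel _
    rw [h2, h1, Fid]
  let mkA : ∀ (b d : ZMod N), IsUnit d → MulAut ↥R := fun b d hd =>
    { toFun := Fraw b d
      invFun := Fraw (-(d⁻¹ * b)) (d⁻¹)
      left_inv := Finv2 b d hd
      right_inv := Finv1 b d hd
      map_mul' := Fmul b d }
  have mkA_apply : ∀ (b d : ZMod N) (hd : IsUnit d) (x : ↥R), mkA b d hd x = Fraw b d x :=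
    fun _ _ _ _ => rfl
  -- coordinates of the images of ζR and αR under mkA
  have mkA_coord_α : ∀ (b d : ZMod N) (hd : IsUnit d),
      Cf ((mkA b d hd αR : ↥R) : Qbarˣ) = b := by
    intro b d hd
    have h := Fapp b d αR (((0:ℤ) : ZMod N)) 1 hαdec
    have h2 := (coordC _ (Fraw b d αR).2 _ _ h).1
    rw [mkA_apply b d hd, h2]
    push_cast
    ring
  have mkA_coord_ζ : ∀ (b d : ZMod N) (hd : IsUnit d),
      Cf ((mkA b d hd ζR : ↥R) : Qbarˣ) = d := by
    intro b d hd
    have h := Fapp b d ζR (((1:ℤ) : ZMod N)) 0 hζdec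
    have h2 := (coordC _ (Fraw b d ζR).2 _ _ h).1
    rw [mkA_apply b d hd, h2]
    push_cast
    ring
  -- extraction data for an automorphism in autGroup
  have extract : ∀ f : MulAut ↥R, f ∈ autGroup a ha N →
      ∃ i : ℤ, ((f ζR : ↥R) : Qbarˣ) = ζ ^ i ∧ Cf ((f ζR : ↥R) : Qbarˣ) = (i : ZMod N) ∧
        IsUnit (Cf ((f ζR : ↥R) : Qbarˣ)) ∧
        (∀ x : ↥R, f x = Fraw (Cf ((f αR : ↥R) : Qbarˣ)) ((i : ZMod N)) x) := by
    intro f hf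
    obtain ⟨i, hi⟩ := himgζ f
    obtain ⟨i', hi'⟩ := himgζ f.symm
    have hcf : Cf ((f ζR : ↥R) : Qbarˣ) = (i : ZMod N) := by
      refine (coordC _ (f ζR).2 _ 0 ?_).1
      rw [zm_int, zpow_zero, mul_one]
      exact hi
    have hu : IsUnit (Cf ((f ζR : ↥R) : Qbarˣ)) := by
      rw [hcf]
      exact IsUnit.of_mul_eq_one _ (hdunit f i i' hi hi')
    exact ⟨i, hi, hcf, hu, happly f i hi (himgα f ((autmem f).mp hf))⟩
  -- the fixed-r congruence for an automorphism in autGroup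
  have extract_cong : ∀ f : MulAut ↥R, f ∈ autGroup a ha N →
      ZMod.castHom hM (ZMod M) ((1 : ZMod N) * Cf ((f αR : ↥R) : Qbarˣ) + 1) =
        ZMod.castHom hM (ZMod M) (Cf ((f ζR : ↥R) : Qbarˣ)) := by
    intro f hf
    obtain ⟨i, hi, hcf, hu, hap⟩ := extract f hf
    set b := Cf ((f αR : ↥R) : Qbarˣ) with hbdef
    set d := Cf ((f ζR : ↥R) : Qbarˣ) with hddef
    have fixr : f rR = rR := (autmem f).mp hf rR hrQ
    have h1 : Fraw b ((i : ZMod N)) rR = rR := by rw [← hap]; exact fixr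
    have h2 : zm ((i : ZMod N) * ((-(q:ℤ) : ℤ) : ZMod N) + b * ((((q:ℕ) : ℤ) : ℤ) : ZMod N))
          * α ^ (((q:ℕ) : ℤ)) = zm ((-(q:ℤ) : ℤ) : ZMod N) * α ^ (((q:ℕ) : ℤ)) := by
      calc _ = ((Fraw b ((i : ZMod N)) rR : ↥R) : Qbarˣ) := (Fapp _ _ rR _ _ hrU).symm
      _ = ((rR : ↥R) : Qbarˣ) := by rw [h1]
      _ = _ := hrU
    have h4 := zm_inj _ _ (mul_right_cancel h2)
    have key : (b + 1 - d) * ((q:ℕ) : ZMod N) = 0 := by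
      rw [hcf]
      push_cast at h4 ⊢
      linear_combination h4
    have h5 := (castc _).mpr key
    rw [map_sub, map_add, sub_eq_zero] at h5
    rw [one_mul, map_add]
    exact h5
  -- assemble
  refine ⟨MulEquiv.symm ?_⟩
  refine
    { toFun := fun A =>
        ⟨mkA (A.1 1 0) (A.1 1 1) ((matmem A.1).mp A.2).2.2.1,
          (autmem _).mpr (mem_aut (A.1 1 0) (A.1 1 1) ((matmem A.1).mp A.2).2.2.1
            ((matmem A.1).mp A.2).2.2.2 _ (fun _ => rfl))⟩
      invFun := fun f =>
        ⟨!![1, 0; Cf ((f.1 αR : ↥R) : Qbarˣ), Cf ((f.1 ζR : ↥R) : Qbarˣ)],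
          (matmem _).mpr ⟨by norm_num, by norm_num, ?_, ?_⟩⟩
      left_inv := ?_
      right_inv := ?_
      map_mul' := ?_ }
  · -- IsUnit entry
    obtain ⟨i, hi, hcf, hu, hap⟩ := extract f.1 f.2
    simpa using hu
  · -- congruence entry
    have h := extract_cong f.1 f.2
    simpa using h
  · -- left_inv
    intro A
    apply Subtype.ext
    have hA := (matmem A.1).mp A.2
    ext i j
    fin_cases i <;> fin_cases j
    · simpa using hA.1.symm
    · simpa using hA.2.1.symm
    · simpa using mkA_coord_α (A.1 1 0) (A.1 1 1) hA.2.2.1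
    · simpa using mkA_coord_ζ (A.1 1 0) (A.1 1 1) hA.2.2.1
  · -- right_inv
    intro f
    apply Subtype.ext
    obtain ⟨i, hi, hcf, hu, hap⟩ := extract f.1 f.2
    apply MulEquiv.ext
    intro x
    show Fraw ((!![1, 0; Cf ((f.1 αR : ↥R) : Qbarˣ), Cf ((f.1 ζR : ↥R) : Qbarˣ)] :
        Matrix (Fin 2) (Fin 2) (ZMod N)) 1 0)
      ((!![1, 0; Cf ((f.1 αR : ↥R) : Qbarˣ), Cf ((f.1 ζR : ↥R) : Qbarˣ)] :
        Matrix (Fin 2) (Fin 2) (ZMod N)) 1 1) x = f.1 x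
    have e10 : (!![1, 0; Cf ((f.1 αR : ↥R) : Qbarˣ), Cf ((f.1 ζR : ↥R) : Qbarˣ)] :
        Matrix (Fin 2) (Fin 2) (ZMod N)) 1 0 = Cf ((f.1 αR : ↥R) : Qbarˣ) := by simp
    have e11 : (!![1, 0; Cf ((f.1 αR : ↥R) : Qbarˣ), Cf ((f.1 ζR : ↥R) : Qbarˣ)] :
        Matrix (Fin 2) (Fin 2) (ZMod N)) 1 1 = Cf ((f.1 ζR : ↥R) : Qbarˣ) := by simp
    rw [e10, e11, hcf]
    exact (hap x).symm
  · -- map_mul'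
    intro A B
    apply Subtype.ext
    apply MulEquiv.ext
    intro x
    have hB := (matmem B.1).mp B.2
    show Fraw ((A.1 * B.1) 1 0) ((A.1 * B.1) 1 1) x =
      Fraw (A.1 1 0) (A.1 1 1) (Fraw (B.1 1 0) (B.1 1 1) x)
    have e10 : (A.1 * B.1) 1 0 = A.1 1 0 + A.1 1 1 * B.1 1 0 := by
      simp [Matrix.mul_apply, Fin.sum_univ_two, hB.1]
    have e11 : (A.1 * B.1) 1 1 = A.1 1 1 * B.1 1 1 := by
      simp [Matrix.mul_apply, Fin.sum_univ_two, hB.2.1]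
    rw [e10, e11, Fcomp]

theorem exists_pow_eq_of_dvd_factorization (n : ℕ) (hn : n ≠ 0) (c : ℕ)
    (hc : ∀ ℓ : ℕ, c ∣ n.factorization ℓ) : ∃ b : ℕ, n = b ^ c := by
  refine ⟨n.factorization.prod fun ℓ u => ℓ ^ (u / c), ?_⟩
  conv_lhs => rw [← Nat.factorization_prod_pow_eq_self hn]
  rw [Finsupp.prod, Finsupp.prod, ← Finset.prod_pow]
  apply Finset.prod_congr rfl
  intro ℓ _
  rw [← pow_mul, Nat.div_mul_cancel (hc ℓ)]

/-- **Proposition 3.1 (ii), untwisted case**: if `p` is odd, or `p = 2` and (`e` is odd or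
`a > 0`), then for every `k ≥ 1` the group `A(p^k)` is isomorphic to the group of matrices
`(1 0; b d)` with `b ∈ ℤ/p^kℤ`, `d ∈ (ℤ/p^kℤ)^×` and `b + 1 ≡ d (mod p^{min(k, ν_p(e))})`. -/
theorem autGroup_iso_matGroup_untwisted
    (a : ℤ) (ha : a ≠ 0) (ha1 : a ≠ 1) (ham1 : a ≠ -1)
    (e : ℕ) (a₀ : ℤ)
    (he : IsGreatest {m : ℕ | 0 < m ∧ ∃ b : ℕ, |a| = (b : ℤ) ^ m} e)
    (ha₀ : |a₀| ^ e = |a|) (hsgn : a₀.sign = a.sign)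
    (p : ℕ) (hp : p.Prime) (hcase : p ≠ 2 ∨ Odd e ∨ 0 < a) :
    ∀ k : ℕ, 1 ≤ k →
      Nonempty (↥(autGroup a ha (p ^ k)) ≃*
        ↥(matGroup (p ^ k) (p ^ min k (padicValNat p e)) 1
          (pow_dvd_pow p (min_le_left k (padicValNat p e))))) := by
  intro k hk
  classical
  haveI : CharZero Qbar := charZero_of_injective_algebraMap (algebraMap ℚ Qbar).injective
  have ha2 : 1 < |a| := by
    have h1 : a ≤ -2 ∨ 2 ≤ a := by omega
    rcases h1 with h | h
    · rw [abs_of_nonpos (by omega)]; omega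
    · rw [abs_of_nonneg (by omega)]; omega
  have hepos : 0 < e := he.1.1
  set ν : ℕ := padicValNat p e with hν
  set μ : ℕ := min k ν with hμ
  set N : ℕ := p ^ k with hNdef
  set M : ℕ := p ^ μ with hMdef
  have hM : M ∣ N := pow_dvd_pow p (min_le_left k ν)
  have hNpos : 0 < N := pow_pos hp.pos k
  haveI : NeZero N := ⟨hNpos.ne'⟩
  have hMe : M ∣ e :=
    dvd_trans (pow_dvd_pow p (min_le_right k ν)) (pow_padicValNat_dvd)
  have hMpos : 0 < M := pow_pos hp.pos μ
  have hqNM : N / M = p ^ (k - μ) := by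
    rw [hNdef, hMdef, Nat.pow_div (min_le_left k ν) hp.pos]
  -- the distinguished rational radical r
  set r : ℤ := a.sign * |a₀| ^ (e / M) with hrdef
  have ha₀2 : 2 ≤ |a₀| := by
    by_contra h
    push_neg at h
    have h0 : 0 ≤ |a₀| := abs_nonneg a₀
    rcases (by omega : |a₀| = 0 ∨ |a₀| = 1) with h' | h'
    · rw [h', zero_pow hepos.ne'] at ha₀; omega
    · rw [h', one_pow] at ha₀; omega
  have hrM : r ^ M = a := by
    rw [hrdef, mul_pow, ← pow_mul, Nat.div_mul_cancel hMe, ha₀]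
    have hsa : a.sign ^ M = a.sign := by
      rcases lt_or_gt_of_ne ha with hneg | hpos
      · rw [Int.sign_eq_neg_one_of_neg hneg]
        apply Odd.neg_one_pow
        rcases eq_or_ne p 2 with rfl | hp2
        · have hOdd : Odd e := by
            rcases hcase with h | h | h
            · omega
            · exact h
            · omega
          have hν0 : ν = 0 := by
            rw [hν]
            exact padicValNat.eq_zero_of_not_dvd (by
              intro hdvd
              exact (Nat.odd_iff.mp hOdd).symm.trans_ne (by omega)
                (Nat.eq_zero_of_dvd_of_lt hdvd |> fun _ => rfl) |>.elim)
          rw [hMdef, hμ, hν0]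
          simp
        · have : Odd p := hp.odd_of_ne_two hp2
          exact this.pow
      · rw [Int.sign_eq_one_of_pos hpos]
        simp
    rw [hsa, Int.sign_mul_abs]
  have hr0 : r ≠ 0 := by
    intro h
    rw [h, zero_pow hMpos.ne'] at hrM
    exact ha hrM.symm
  -- ζ, γ, α, rU
  obtain ⟨z0, hz0⟩ := HasEnoughRootsOfUnity.exists_primitiveRoot Qbar N
  have hz0u : IsUnit z0 := hz0.isUnit hNpos.ne'
  set ζ : Qbarˣ := hz0u.unit with hζdef
  have hζ : IsPrimitiveRoot ζ N := by
    apply IsPrimitiveRoot.coe_units_iff.mp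
    rw [IsUnit.unit_spec]
    exact hz0
  have hrQ0 : ((r : ℤ) : Qbar) ≠ 0 := by exact_mod_cast hr0
  obtain ⟨g, hg⟩ := IsAlgClosed.exists_pow_nat_eq ((r : ℤ) : Qbar) (n := N / M)
    (by rw [hqNM]; exact pow_pos hp.pos _)
  have hg0 : g ≠ 0 := by
    intro h
    rw [h, zero_pow (by rw [hqNM]; exact (pow_pos hp.pos _).ne')] at hg
    exact hrQ0 hg.symm
  set γ : Qbarˣ := Units.mk0 g hg0 with hγdef
  set α : Qbarˣ := ζ * γ with hαdef
  set rU : Qbarˣ := Units.mk0 ((r : ℤ) : Qbar) hrQ0 with hrUdef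
  have hrα : rU = (ζ⁻¹ * α) ^ (N / M) := by
    have h1 : ζ⁻¹ * α = γ := by rw [hαdef, ← mul_assoc, inv_mul_cancel, one_mul]
    rw [h1]
    apply Units.ext
    rw [hrUdef]
    push_cast
    exact hg.symm
  have hα : α ^ N = aUnit a ha := by
    apply Units.ext
    have hNqM : N = (N / M) * M := (Nat.div_mul_cancel hM).symm
    push_cast [hαdef]
    rw [mul_pow]
    have h1 : (ζ : Qbar) ^ N = 1 := by
      rw [hζdef, hz0u.unit_spec]
      exact hz0.pow_eq_one
    have h2 : ((γ : Qbarˣ) : Qbar) ^ N = ((a : ℤ) : Qbar) := by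
      rw [hγdef, Units.val_mk0]
      conv_lhs => rw [hNqM]
      rw [pow_mul, hg]
      rw [show (((r : ℤ) : Qbar)) ^ M = (((r ^ M : ℤ)) : Qbar) by push_cast; ring, hrM]
    rw [h1, one_mul, h2]
    rfl
  have hrQ : ((rU : Qbarˣ) : Qbar) ∈ Set.range (algebraMap ℚ Qbar) :=
    ⟨((r : ℤ) : ℚ), by rw [map_intCast]; rfl⟩
  -- the main rationality lemma
  set n₀ : ℕ := a₀.natAbs with hn₀
  have hn₀2 : 2 ≤ n₀ := by
    have := ha₀2
    rw [Int.abs_eq_natAbs] at this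
    exact_mod_cast this
  have hanat : a.natAbs = n₀ ^ e := by
    have h0 := ha₀
    rw [Int.abs_eq_natAbs, Int.abs_eq_natAbs] at h0
    exact_mod_cast h0.symm
  have keyQ : ∀ y : ℚ, y ≠ 0 → ∀ m₀ : ℕ, y ^ N = ((a : ℤ) : ℚ) ^ m₀ →
      ∃ s : ℕ, y = ((r : ℤ) : ℚ) ^ s ∨ y = -(((r : ℤ) : ℚ) ^ s) := by
    intro y hy0 m₀ hyN
    have hden : y.den = 1 := by
      have h1 : (y ^ N).den = 1 := by
        rw [hyN, show ((a:ℤ):ℚ) ^ m₀ = ((a ^ m₀ : ℤ) : ℚ) by push_cast; ring]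
        exact Rat.den_intCast _
      rw [y.den_pow N] at h1
      exact (pow_eq_one_iff.mp h1).resolve_right hNpos.ne'
    set z : ℤ := y.num with hzdef
    have hyz : y = (z : ℚ) := (Rat.coe_int_num_of_den_eq_one hden).symm
    have hz0' : z ≠ 0 := by
      intro h0
      rw [h0] at hyz
      exact hy0 (by exact_mod_cast hyz)
    have hzN : z ^ N = a ^ m₀ := by
      have : ((z:ℚ)) ^ N = ((a ^ m₀ : ℤ) : ℚ) := by
        rw [← hyz, hyN]; push_cast; ring
      exact_mod_cast this
    have claim1 : p ^ k ∣ e * m₀ := by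
      rcases Nat.eq_zero_or_pos m₀ with rfl | hm₀
      · simp
      by_contra hnd
      set T : ℕ := e * m₀ with hTdef
      have hT0 : T ≠ 0 := Nat.mul_ne_zero hepos.ne' hm₀.ne'
      have htk : T.factorization p < k := by
        by_contra hge
        exact hnd ((hp.pow_dvd_iff_le_factorization hT0).mpr (by omega))
      set t := T.factorization p with htdef
      have habs : z.natAbs ^ N = n₀ ^ T := by
        have h0 : (z ^ N).natAbs = (a ^ m₀).natAbs := by rw [hzN]
        rw [Int.natAbs_pow, Int.natAbs_pow, hanat, ← pow_mul] at h0
        exact h0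
      have hforall : ∀ ℓ : ℕ, p ^ (k - t) ∣ n₀.factorization ℓ := by
        intro ℓ
        have h1 : N * z.natAbs.factorization ℓ = T * n₀.factorization ℓ := by
          have h0 := congrArg Nat.factorization habs
          rw [Nat.factorization_pow, Nat.factorization_pow] at h0
          have h2 := DFunLike.congr_fun h0 ℓ
          simpa using h2
        by_cases hw : n₀.factorization ℓ = 0
        · simp [hw]
        · have hdvd : p ^ k ∣ T * n₀.factorization ℓ :=
            ⟨z.natAbs.factorization ℓ, by rw [← h1, hNdef]⟩
          have hle : k ≤ (T * n₀.factorization ℓ).factorization p :=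
            (hp.pow_dvd_iff_le_factorization (Nat.mul_ne_zero hT0 hw)).mp hdvd
          rw [Nat.factorization_mul hT0 hw, Finsupp.add_apply] at hle
          have h3 : k - t ≤ (n₀.factorization ℓ).factorization p := by omega
          exact dvd_trans (pow_dvd_pow p h3) (Nat.ordProj_dvd _ _)
      obtain ⟨b, hb⟩ := exists_pow_eq_of_dvd_factorization n₀ (by omega) (p ^ (k - t)) hforall
      have h2le : 2 ≤ p ^ (k - t) := by
        calc 2 ≤ p := hp.two_le
        _ = p ^ 1 := (pow_one p).symm
        _ ≤ p ^ (k - t) := Nat.pow_le_pow_right hp.pos (by omega)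
      have hbig : p ^ (k - t) * e ≤ e := by
        apply he.2
        refine ⟨by positivity, b, ?_⟩
        rw [← ha₀, Int.abs_eq_natAbs a₀]
        rw [show ((a₀.natAbs : ℤ)) = ((n₀ : ℕ) : ℤ) from rfl, hb]
        push_cast
        rw [← pow_mul]
      have h3 : 2 * e ≤ p ^ (k - t) * e := Nat.mul_le_mul_right e h2le
      omega
    have claim2 : p ^ (k - μ) ∣ m₀ := by
      rcases Nat.eq_zero_or_pos m₀ with rfl | hm₀
      · simp
      have h1 : k ≤ (e * m₀).factorization p :=
        (hp.pow_dvd_iff_le_factorization (Nat.mul_ne_zero hepos.ne' hm₀.ne')).mp claim1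
      rw [Nat.factorization_mul hepos.ne' hm₀.ne', Finsupp.add_apply] at h1
      have hν' : e.factorization p = ν := by rw [hν, Nat.factorization_def e hp]
      rw [hν'] at h1
      have h2 : k - μ ≤ m₀.factorization p := by
        rw [hμ]
        omega
      exact dvd_trans (pow_dvd_pow p h2) (Nat.ordProj_dvd _ _)
    obtain ⟨s₀, hs₀⟩ := claim2
    refine ⟨s₀, ?_⟩
    have hzz : z ^ N = (r ^ s₀) ^ N := by
      rw [hzN, ← hrM, ← pow_mul, ← pow_mul, hs₀, hNdef, hMdef, ← mul_assoc, ← pow_add]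
      rw [show μ + (k - μ) = k by omega, mul_comm]
    have hnat : z.natAbs = (r ^ s₀).natAbs := by
      have h0 : z.natAbs ^ N = (r ^ s₀).natAbs ^ N := by
        rw [← Int.natAbs_pow, ← Int.natAbs_pow, hzz]
      exact Nat.pow_left_injective (by omega) h0
    rcases Int.natAbs_eq_natAbs_iff.mp hnat with h | h
    · left; rw [hyz, h]; push_cast; ring
    · right; rw [hyz, h]; push_cast; ring
  have coe_rU_zpow : ∀ s : ℤ, ((rU ^ s : Qbarˣ) : Qbar) = algebraMap ℚ Qbar (((r:ℤ):ℚ) ^ s) := by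
    intro s
    rw [Units.val_zpow_eq_zpow_val, map_zpow₀, map_intCast]
    rfl
  have hQ : ∀ x : Qbarˣ, x ∈ radical a ha N → ((x : Qbarˣ) : Qbar) ∈ Set.range (algebraMap ℚ Qbar) →
      ∃ s : ℤ, x = rU ^ s ∨ x = -rU ^ s := by
    intro x hx hxr
    obtain ⟨y, hy⟩ := hxr
    have hy0 : y ≠ 0 := by
      intro h0
      rw [h0, map_zero] at hy
      exact Units.ne_zero x hy.symm
    obtain ⟨m, hm⟩ := Subgroup.mem_zpowers_iff.mp (Subgroup.mem_comap.mp hx)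
    have hv : ((a:ℤ):Qbar) ^ m = ((x : Qbarˣ) : Qbar) ^ N := by
      have h0 := congrArg (Units.val) hm
      rw [Units.val_zpow_eq_zpow_val] at h0
      exact h0
    have hyN : y ^ N = ((a:ℤ):ℚ) ^ m := by
      apply (algebraMap ℚ Qbar).injective
      rw [map_pow, hy, map_zpow₀, map_intCast]
      exact hv.symm
    have ueq : ∀ s : ℤ, y = ((r:ℤ):ℚ) ^ s → x = rU ^ s := by
      intro s hys
      apply Units.ext
      rw [← hy, hys, coe_rU_zpow]
    have ueqn : ∀ s : ℤ, y = -(((r:ℤ):ℚ) ^ s) → x = -rU ^ s := by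
      intro s hys
      apply Units.ext
      rw [show ((-rU ^ s : Qbarˣ) : Qbar) = -((rU ^ s : Qbarˣ) : Qbar) from Units.val_neg _,
        coe_rU_zpow, ← hy, hys, map_neg]
    rcases m.eq_nat_or_neg with ⟨m₀, rfl | rfl⟩
    · obtain ⟨s₀, h | h⟩ := keyQ y hy0 m₀ (by rw [hyN, zpow_natCast])
      · exact ⟨(s₀:ℤ), Or.inl (ueq _ (by rw [zpow_natCast]; exact h))⟩
      · exact ⟨(s₀:ℤ), Or.inr (ueqn _ (by rw [zpow_natCast]; exact h))⟩
    · have hyinv : (y⁻¹) ^ N = ((a:ℤ):ℚ) ^ m₀ := by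
        rw [inv_pow, hyN, zpow_neg, inv_inv, zpow_natCast]
      obtain ⟨s₀, h | h⟩ := keyQ y⁻¹ (inv_ne_zero hy0) m₀ hyinv
      · refine ⟨-(s₀:ℤ), Or.inl (ueq _ ?_)⟩
        rw [zpow_neg, zpow_natCast, ← h, inv_inv]
      · refine ⟨-(s₀:ℤ), Or.inr (ueqn _ ?_)⟩
        have h2 : y = (-(((r : ℤ):ℚ) ^ s₀))⁻¹ := by rw [← h, inv_inv]
        rw [h2, inv_neg, zpow_neg, zpow_natCast]
  exact abstract_iso a ha ha2 N M hM hNpos ζ α hζ hα rU hrQ hrα hQ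
end
end

section
/- Suppose e is even and a < 0 (the twisted case); write e = 2^ν e₁ with ν = ν_2(e) ≥ 1 and e₁ odd, let a₁ be the positive integer with a₁^e = |a|, and set c = −a₁^{e₁} ∈ ℤ. Then every α ∈ Q̄ with α² = c lies in R_{2^{ν+2}}, and: (1) there exists an automorphism τ of R_{2^{ν+2}} fixing ℚ^× ∩ R_{2^{ν+2}} pointwise whose restriction to R_{2^{ν+1}} is the identity and which satisfies τ(α) = −α for every α with α² = c; (2) every automorphism τ′ of R_{2^{ν+3}} fixing ℚ^× ∩ R_{2^{ν+3}} pointwise whose restriction to R_{2^{ν+2}} is the identity satisfies τ′(α) = α for every α with α² = c. (Equivalently, s = ν_2(e)+2 is the smallest k for which the quadratic character ψ_{K,2} of A_2 = lim← A(2^j) factors through A(2^k).) -/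
noncomputable section

-- L5: a rational square root of a natural number forces the natural to be a square
lemma isSquare_of_rat_sq {s : ℚ} {m : ℕ} (hs : s ^ 2 = (m : ℚ)) : IsSquare m := by
  have hnum : (s.num : ℚ) ^ 2 = (m : ℚ) * (s.den : ℚ) ^ 2 := by
    have hd : (s.den : ℚ) ≠ 0 := by exact_mod_cast s.den_ne_zero
    have : s = (s.num : ℚ) / (s.den : ℚ) := (Rat.num_div_den s).symm
    rw [this] at hs
    field_simp at hs
    linarith [hs]
  have hZ : s.num ^ 2 = (m : ℤ) * (s.den : ℤ) ^ 2 := by exact_mod_cast hnum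
  have hdvd : (s.den : ℤ) ^ 2 ∣ s.num ^ 2 := ⟨(m : ℤ), by linarith [hZ]⟩
  have hdvdn : s.den ^ 2 ∣ s.num.natAbs ^ 2 := by
    have := Int.natAbs_dvd_natAbs.mpr hdvd
    simpa [Int.natAbs_pow] using this
  have hcop : (s.num.natAbs ^ 2).Coprime (s.den ^ 2) := s.reduced.pow 2 2
  have hden1 : s.den = 1 := by
    have h1 : s.den ^ 2 = 1 := Nat.Coprime.eq_one_of_dvd hcop.symm hdvdn
    nlinarith [s.pos]
  have : s.num ^ 2 = (m : ℤ) := by rw [hZ, hden1]; push_cast; ring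
  refine ⟨s.num.natAbs, ?_⟩
  have : s.num.natAbs ^ 2 = m := by
    have := congrArg Int.natAbs this
    simpa [Int.natAbs_pow] using this
  nlinarith [this]

-- L4: key 2-adic divisibility for rational points in R_{2^(nu+2)}
lemma four_dvd_exponent (a : ℤ) (a₁ ν e₁ : ℕ) (hnotsq : ¬ IsSquare a₁)
    (haneg : a < 0) (ha₁0 : 0 < a₁)
    (habs : ((a₁ : ℤ)) ^ (2 ^ ν * e₁) = |a|) (he₁ : Odd e₁) (hν1 : 1 ≤ ν)
    (r : ℚ) (hr : r ≠ 0) (k : ℤ) (h : r ^ ((2 : ℕ) ^ (ν + 2)) = (a : ℚ) ^ k) :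
    4 ∣ k := by
  have haQ : (a : ℚ) < 0 := by exact_mod_cast haneg
  have ha₁Q : (0 : ℚ) < (a₁ : ℚ) := by exact_mod_cast ha₁0
  have ha₁Qne : ((a₁ : ℚ)) ≠ 0 := ne_of_gt ha₁Q
  have habs' : ((|a| : ℤ) : ℚ) = |(a : ℚ)| := by push_cast; ring
  -- k is even
  have hkeven : Even k := by
    rcases Int.even_or_odd k with hk | hk
    · exact hk
    · exfalso
      have hneg : (a : ℚ) ^ k < 0 := hk.zpow_neg haQ
      have hpos : (0 : ℚ) ≤ r ^ ((2 : ℕ) ^ (ν + 2)) := by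
        have h2 : (2 : ℕ) ^ (ν + 2) = 2 ^ (ν + 1) * 2 := by ring
        rw [h2, pow_mul]
        exact sq_nonneg _
      rw [h] at hpos; linarith
  obtain ⟨k', hk'⟩ := hkeven
  have hk2 : k = 2 * k' := by omega
  -- r ^ (2^(ν+1)) = |a| ^ k'
  have habsQ : (0 : ℚ) < |(a : ℚ)| := abs_pos.mpr (ne_of_lt haQ)
  have hsq1 : (r ^ ((2 : ℕ) ^ (ν + 1))) ^ 2 = (|(a : ℚ)| ^ k') ^ 2 := by
    rw [← pow_mul]
    have h1 : (2 : ℕ) ^ (ν + 1) * 2 = 2 ^ (ν + 2) := by ring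
    rw [h1, h, hk2]
    rw [← zpow_natCast (|(a : ℚ)| ^ k') 2, ← zpow_mul]
    calc (a : ℚ) ^ (2 * k') = (((a : ℚ)) ^ (2 : ℤ)) ^ k' := by rw [← zpow_mul]
    _ = ((|(a : ℚ)|) ^ (2 : ℤ)) ^ k' := by rw [zpow_two, zpow_two, abs_mul_abs_self]
    _ = |(a : ℚ)| ^ (k' * (2 : ℤ)) := by rw [← zpow_mul]; ring_nf
  have heq1 : r ^ ((2 : ℕ) ^ (ν + 1)) = |(a : ℚ)| ^ k' := by
    have h1 : (0 : ℚ) ≤ r ^ ((2 : ℕ) ^ (ν + 1)) := by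
      have h2 : (2 : ℕ) ^ (ν + 1) = 2 ^ ν * 2 := by ring
      rw [h2, pow_mul]; exact sq_nonneg _
    have h2 : (0 : ℚ) ≤ |(a : ℚ)| ^ k' := le_of_lt (zpow_pos habsQ k')
    exact (pow_left_strictMonoOn₀ (two_ne_zero)).injOn h1 h2 hsq1
  -- rewrite |a| as a₁ ^ (2^ν * e₁)
  have habsQ2 : |(a : ℚ)| = ((a₁ : ℚ)) ^ ((2 : ℕ) ^ ν * e₁) := by
    rw [← habs'] ; rw [← habs]; push_cast; ring
  -- r^2 = a₁ ^ (e₁ * k')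
  have heq2 : (r ^ 2) ^ ((2 : ℕ) ^ ν) = (((a₁ : ℚ)) ^ ((e₁ : ℤ) * k')) ^ ((2 : ℕ) ^ ν) := by
    rw [← pow_mul]
    have h1 : 2 * (2 : ℕ) ^ ν = 2 ^ (ν + 1) := by ring
    rw [h1, heq1, habsQ2]
    rw [← zpow_natCast ((a₁ : ℚ)) ((2 : ℕ) ^ ν * e₁), ← zpow_mul,
      ← zpow_natCast (((a₁ : ℚ)) ^ ((e₁ : ℤ) * k')) ((2 : ℕ) ^ ν), ← zpow_mul]
    congr 1
    push_cast
    ring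
  have heq3 : r ^ 2 = ((a₁ : ℚ)) ^ ((e₁ : ℤ) * k') := by
    have h1 : (0 : ℚ) ≤ r ^ 2 := sq_nonneg r
    have h2 : (0 : ℚ) ≤ ((a₁ : ℚ)) ^ ((e₁ : ℤ) * k') := le_of_lt (zpow_pos ha₁Q _)
    exact (pow_left_strictMonoOn₀ (pow_ne_zero ν two_ne_zero)).injOn h1 h2 heq2
  -- conclude
  by_contra h4
  have hk'odd : Odd k' := by
    rcases Int.even_or_odd k' with hk | hk
    · exfalso; obtain ⟨j, hj⟩ := hk; exact h4 ⟨j, by omega⟩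
    · exact hk
  have htodd : Odd ((e₁ : ℤ) * k') := (Int.odd_coe_nat e₁ |>.mpr he₁).mul hk'odd
  obtain ⟨u, hu⟩ := htodd
  have hs : (r * ((a₁ : ℚ)) ^ (-u)) ^ 2 = ((a₁ : ℚ)) := by
    rw [mul_pow, heq3, ← zpow_natCast (((a₁ : ℚ)) ^ (-u)) 2, ← zpow_mul, ← zpow_add₀ ha₁Qne]
    rw [hu]
    have h5 : 2 * u + 1 + -u * ((2:ℕ):ℤ) = 1 := by push_cast; ring
    rw [h5, zpow_one]
  exact hnotsq (isSquare_of_rat_sq hs)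

/-- **Proposition 3.2, twisted case** (`e` even, `a < 0`, `e = 2^ν e₁` with `e₁` odd,
`c = −a₁^{e₁}`): every square root `α` of `c` lies in `R_{2^{ν+2}}`; there is an
automorphism of `R_{2^{ν+2}}` fixing `ℚ^× ∩ R_{2^{ν+2}}` pointwise, restricting to the
identity on `R_{2^{ν+1}}`, and sending each such `α` to `−α`; and every automorphism of
`R_{2^{ν+3}}` fixing `ℚ^× ∩ R_{2^{ν+3}}` pointwise and restricting to the identity on
`R_{2^{ν+2}}` fixes each such `α`. (Equivalently, `s = ν₂(e)+2` is the smallest `k` for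
which `ψ_{K,2}` factors through `A(2^k)`.) -/
theorem psi_factoring_twisted
    (a : ℤ) (ha : a ≠ 0) (ha1 : a ≠ 1) (ham1 : a ≠ -1)
    (e : ℕ) (a₀ : ℤ)
    (he : IsGreatest {m : ℕ | 0 < m ∧ ∃ b : ℕ, |a| = (b : ℤ) ^ m} e)
    (ha₀ : |a₀| ^ e = |a|) (hsgn : a₀.sign = a.sign)
    (htw : Even e ∧ a < 0)
    (ν e₁ : ℕ) (hν : ν = padicValNat 2 e) (hν1 : 1 ≤ ν) (he₁ : Odd e₁)
    (hee : e = 2 ^ ν * e₁)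
    (a₁ : ℕ) (ha₁ : ((a₁ : ℤ)) ^ e = |a|)
    (c : ℤ) (hc : c = -((a₁ : ℤ)) ^ e₁) :
    (∀ α : Qbarˣ, ((α : Qbar)) ^ 2 = (c : Qbar) → α ∈ radical a ha (2 ^ (ν + 2))) ∧
    (∃ τ ∈ autGroup a ha (2 ^ (ν + 2)),
      (∀ x : ↥(radical a ha (2 ^ (ν + 2))),
          (x : Qbarˣ) ∈ radical a ha (2 ^ (ν + 1)) → τ x = x) ∧
      ∀ (α : Qbarˣ) (hmem : α ∈ radical a ha (2 ^ (ν + 2))),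
        ((α : Qbar)) ^ 2 = (c : Qbar) →
          ((τ ⟨α, hmem⟩ : Qbarˣ) : Qbar) = -(α : Qbar)) ∧
    (∀ τ' ∈ autGroup a ha (2 ^ (ν + 3)),
      (∀ x : ↥(radical a ha (2 ^ (ν + 3))),
          (x : Qbarˣ) ∈ radical a ha (2 ^ (ν + 2)) → τ' x = x) →
      ∀ (α : Qbarˣ) (hmem : α ∈ radical a ha (2 ^ (ν + 3))),
        ((α : Qbar)) ^ 2 = (c : Qbar) →
          ((τ' ⟨α, hmem⟩ : Qbarˣ) : Qbar) = (α : Qbar)) := by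
  obtain ⟨heeven, haneg⟩ := htw
  have he0 : 0 < e := he.1.1
  have habs2 : (2:ℤ) ≤ |a| := by rw [abs_of_neg haneg]; omega
  have ha₁2 : 2 ≤ (a₁:ℤ) := by
    by_contra hlt
    push_neg at hlt
    have h0 : (0:ℤ) ≤ (a₁:ℤ) := Int.natCast_nonneg a₁
    have h1 : (a₁:ℤ)^e ≤ 1 := pow_le_one₀ h0 (by omega)
    rw [ha₁] at h1; omega
  have ha₁pos : 0 < a₁ := by exact_mod_cast (show (0:ℤ) < (a₁:ℤ) by omega)
  have hnotsq : ¬ IsSquare a₁ := by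
    rintro ⟨b0, hb0⟩
    have h2e : 2*e ∈ {m : ℕ | 0 < m ∧ ∃ b : ℕ, |a| = (b:ℤ)^m} := by
      refine ⟨by omega, b0, ?_⟩
      rw [← ha₁, hb0]
      push_cast
      rw [pow_mul]
      ring
    have := he.2 h2e; omega
  have habs' : ((a₁:ℤ)) ^ (2^ν * e₁) = |a| := by rw [← hee]; exact ha₁
  have hQi : Function.Injective (algebraMap ℚ Qbar) := (algebraMap ℚ Qbar).injective
  have hAval : ((aUnit a ha : Qbarˣ) : Qbar) = algebraMap ℚ Qbar ((a:ℚ)) :=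
    (map_intCast (algebraMap ℚ Qbar) a).symm
  have hAinj : ∀ i j : ℤ, aUnit a ha ^ i = aUnit a ha ^ j → i = j := by
    intro i j hij
    have h1 : ((aUnit a ha : Qbarˣ):Qbar) ^ i = ((aUnit a ha : Qbarˣ):Qbar) ^ j := by
      rw [← Units.val_zpow_eq_zpow_val, ← Units.val_zpow_eq_zpow_val, hij]
    rw [hAval, ← map_zpow₀, ← map_zpow₀] at h1
    have h2 : (a:ℚ)^i = (a:ℚ)^j := hQi h1
    have h3 : ((a:ℚ)^(2:ℤ))^i = ((a:ℚ)^(2:ℤ))^j := by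
      rw [← zpow_mul, ← zpow_mul, mul_comm (2:ℤ) i, mul_comm (2:ℤ) j, zpow_mul, zpow_mul, h2]
    have haM : (a:ℚ) ≤ -2 := by exact_mod_cast (show a ≤ -2 by rw [abs_of_neg haneg] at habs2; omega)
    have hb1 : (1:ℚ) < (a:ℚ)^(2:ℤ) := by rw [zpow_two]; nlinarith
    exact zpow_right_injective₀ (by linarith) (ne_of_gt hb1) h3
  have hmemIff : ∀ (m : ℕ) (x : Qbarˣ), x ∈ radical a ha m ↔ ∃ k : ℤ, x ^ m = aUnit a ha ^ k := by
    intro m x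
    simp only [radical, Subgroup.mem_comap, Subgroup.mem_zpowers_iff, powMonoidHom_apply]
    constructor
    · rintro ⟨k, hk⟩; exact ⟨k, hk.symm⟩
    · rintro ⟨k, hk⟩; exact ⟨k, hk.symm⟩
  have hevenν : Even ((2:ℕ)^ν) := by
    obtain ⟨ν', rfl⟩ : ∃ ν', ν = ν' + 1 := ⟨ν - 1, by omega⟩
    exact ⟨2^ν', by rw [pow_succ]; ring⟩
  have hint1 : c ^ ((2:ℕ)^ν) = -a := by
    rw [hc, Even.neg_pow hevenν, ← pow_mul, mul_comm e₁, ← hee, ha₁, abs_of_neg haneg]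
  have hint2 : c ^ ((2:ℕ)^(ν+1)) = a^2 := by
    have h1 : (2:ℕ)^(ν+1) = 2^ν * 2 := by ring
    rw [h1, pow_mul, hint1]; ring
  -- Part A
  have hpartA : ∀ α : Qbarˣ, ((α : Qbar))^2 = (c : Qbar) →
      α ^ ((2:ℕ)^(ν+2)) = aUnit a ha ^ (2:ℤ) := by
    intro α hα
    apply Units.ext
    rw [Units.val_pow_eq_pow_val, Units.val_zpow_eq_zpow_val]
    have h1 : (2:ℕ)^(ν+2) = 2 * 2^(ν+1) := by ring
    rw [h1, pow_mul, hα]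
    have hcv : ((aUnit a ha : Qbarˣ) : Qbar) = ((a:ℤ):Qbar) := rfl
    rw [hcv]
    calc ((c:ℤ):Qbar) ^ ((2:ℕ)^(ν+1)) = (((c ^ ((2:ℕ)^(ν+1)) : ℤ)):Qbar) := by push_cast; ring
    _ = ((a:ℤ):Qbar)^(2:ℕ) := by rw [hint2]; push_cast; ring
    _ = ((a:ℤ):Qbar)^(2:ℤ) := by norm_cast
  have hmemA : ∀ α : Qbarˣ, ((α : Qbar))^2 = (c : Qbar) → α ∈ radical a ha (2^(ν+2)) :=
    fun α hα => (hmemIff _ _).mpr ⟨2, hpartA α hα⟩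
  -- choose a 2^(ν+2)-th root b of a
  obtain ⟨z, hz⟩ := IsAlgClosed.exists_pow_nat_eq ((aUnit a ha : Qbarˣ) : Qbar)
    (n := 2^(ν+2)) (by positivity)
  have hz0 : z ≠ 0 := by
    intro h0
    rw [h0, zero_pow (by positivity : (0:ℕ) < 2^(ν+2)).ne'] at hz
    exact (Units.ne_zero (aUnit a ha)) hz.symm
  set b : Qbarˣ := Units.mk0 z hz0 with hbdef
  have hb : b ^ ((2:ℕ)^(ν+2)) = aUnit a ha := by
    apply Units.ext
    rw [Units.val_pow_eq_pow_val]
    simpa [hbdef] using hz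
  have hbz : b ^ ((2:ℤ)^(ν+2)) = aUnit a ha := by
    rw [show ((2:ℤ)^(ν+2)) = (((2^(ν+2):ℕ)):ℤ) by push_cast; ring, zpow_natCast, hb]
  -- the exponent map K
  have hex : ∀ x : ↥(radical a ha (2^(ν+2))), ∃ k : ℤ,
      (x : Qbarˣ) ^ ((2:ℕ)^(ν+2)) = aUnit a ha ^ k := fun x => (hmemIff _ _).mp x.2
  choose K hK using hex
  have hKz : ∀ x : ↥(radical a ha (2^(ν+2))), ((x : Qbarˣ)) ^ ((2:ℤ)^(ν+2)) = aUnit a ha ^ (K x) := by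
    intro x
    rw [show ((2:ℤ)^(ν+2)) = (((2^(ν+2):ℕ)):ℤ) by push_cast; ring, zpow_natCast]
    exact hK x
  have hKadd : ∀ x y, K (x * y) = K x + K y := by
    intro x y
    apply hAinj
    rw [← hKz (x * y), zpow_add, ← hKz x, ← hKz y, Subgroup.coe_mul, mul_zpow]
  -- the sign character S
  set S : ↥(radical a ha (2^(ν+2))) → Qbarˣ :=
    fun x => (x : Qbarˣ) ^ ((2:ℤ)^(ν+1)) * b ^ (-((2:ℤ)^(ν+1) * K x)) with hSdef
  have hSapp : ∀ x, S x = (x : Qbarˣ) ^ ((2:ℤ)^(ν+1)) * b ^ (-((2:ℤ)^(ν+1) * K x)) :=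
    fun x => rfl
  have hSsq : ∀ x, S x * S x = 1 := by
    intro x
    rw [hSapp, mul_mul_mul_comm, ← zpow_add, ← zpow_add]
    have e1 : (2:ℤ)^(ν+1) + (2:ℤ)^(ν+1) = (2:ℤ)^(ν+2) := by ring
    have e2 : (-((2:ℤ)^(ν+1) * K x)) + (-((2:ℤ)^(ν+1) * K x)) = (2:ℤ)^(ν+2) * (-(K x)) := by ring
    rw [e1, e2, hKz x, zpow_mul, hbz, ← zpow_add]
    simp
  have hSpm : ∀ x, S x = 1 ∨ S x = -1 := by
    intro x
    have h := hSsq x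
    have hval : ((S x : Qbarˣ) : Qbar) * ((S x : Qbarˣ) : Qbar) = 1 := by
      rw [← Units.val_mul, h, Units.val_one]
    rcases mul_self_eq_one_iff.mp hval with h1 | h1
    · left; exact Units.ext h1
    · right; apply Units.ext; rw [h1]; simp
  have hSmul : ∀ x y, S (x * y) = S x * S y := by
    intro x y
    rw [hSapp, hSapp, hSapp, Subgroup.coe_mul, hKadd x y, mul_zpow]
    rw [show -((2:ℤ)^(ν+1) * (K x + K y)) = -((2:ℤ)^(ν+1) * K x) + -((2:ℤ)^(ν+1) * K y) by ring,
      zpow_add]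
    exact mul_mul_mul_comm _ _ _ _
  have hKone : ∀ x : ↥(radical a ha (2^(ν+2))), (x:Qbarˣ) = 1 ∨ (x:Qbarˣ) = -1 → S x = 1 := by
    intro x hx
    have hxn : (x:Qbarˣ) ^ ((2:ℤ)^(ν+2)) = 1 := by
      rcases hx with h1 | h1 <;> rw [h1]
      · simp
      · exact Even.neg_one_zpow ⟨(2:ℤ)^(ν+1), by ring⟩
    have hK0 : K x = 0 := by
      apply hAinj
      rw [← hKz x, hxn, zpow_zero]
    rw [hSapp, hK0]
    rcases hx with h1 | h1 <;> rw [h1]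
    · simp
    · rw [Even.neg_one_zpow ⟨(2:ℤ)^ν, by ring⟩]
      simp
  have hSmem : ∀ x, S x ∈ radical a ha (2^(ν+2)) := by
    intro x
    rcases hSpm x with h | h <;> rw [h]
    · exact one_mem _
    · refine (hmemIff _ _).mpr ⟨0, ?_⟩
      rw [zpow_zero]
      exact Even.neg_one_pow ⟨2^(ν+1), by ring⟩
  -- the automorphism
  set T : ↥(radical a ha (2^(ν+2))) → ↥(radical a ha (2^(ν+2))) :=
    fun x => ⟨S x * (x : Qbarˣ), mul_mem (hSmem x) x.2⟩ with hTdef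
  have hTapp : ∀ x, ((T x : ↥(radical a ha (2^(ν+2)))) : Qbarˣ) = S x * (x : Qbarˣ) :=
    fun x => rfl
  have hTmul : ∀ x y, T (x*y) = T x * T y := by
    intro x y
    apply Subtype.ext
    rw [Subgroup.coe_mul, hTapp, hTapp, hTapp, Subgroup.coe_mul, hSmul]
    exact mul_mul_mul_comm _ _ _ _
  have hTT : ∀ x, T (T x) = x := by
    intro x
    apply Subtype.ext
    have h1 : T x = (⟨S x, hSmem x⟩ : ↥(radical a ha (2^(ν+2)))) * x := by
      apply Subtype.ext; rw [hTapp, Subgroup.coe_mul]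
    rw [hTapp, h1]
    rw [hSmul ⟨S x, hSmem x⟩ x, hKone ⟨S x, hSmem x⟩ (hSpm x), one_mul, Subgroup.coe_mul]
    rw [← mul_assoc, hSsq x, one_mul]
  set τ : MulAut ↥(radical a ha (2^(ν+2))) :=
    { toFun := T, invFun := T, left_inv := hTT, right_inv := hTT, map_mul' := hTmul } with hτdef
  have hτapp : ∀ x, τ x = T x := fun x => rfl
  -- τ fixes rational elements
  have hτmem : τ ∈ autGroup a ha (2^(ν+2)) := by
    show ∀ x : ↥(radical a ha (2^(ν+2))),
      ((x : Qbarˣ) : Qbar) ∈ Set.range (algebraMap ℚ Qbar) → τ x = x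
    intro x hx
    obtain ⟨r, hr⟩ := hx
    have hr0 : r ≠ 0 := by
      intro h0
      rw [h0, map_zero] at hr
      exact (Units.ne_zero _) hr.symm
    have hQeq : r ^ ((2:ℕ)^(ν+2)) = (a:ℚ) ^ (K x) := by
      apply hQi
      calc algebraMap ℚ Qbar (r ^ ((2:ℕ)^(ν+2)))
          = (algebraMap ℚ Qbar r) ^ ((2:ℕ)^(ν+2)) := by rw [map_pow]
        _ = ((x : Qbarˣ) : Qbar) ^ ((2:ℕ)^(ν+2)) := by rw [hr]
        _ = (((x : Qbarˣ) ^ ((2:ℕ)^(ν+2)) : Qbarˣ) : Qbar) := by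
            rw [Units.val_pow_eq_pow_val]
        _ = ((aUnit a ha ^ (K x) : Qbarˣ) : Qbar) := by rw [hK x]
        _ = ((aUnit a ha : Qbarˣ) : Qbar) ^ (K x) := by rw [Units.val_zpow_eq_zpow_val]
        _ = (algebraMap ℚ Qbar ((a:ℚ))) ^ (K x) := by rw [hAval]
        _ = algebraMap ℚ Qbar ((a:ℚ) ^ (K x)) := by rw [map_zpow₀]
    have h4 : (4:ℤ) ∣ K x :=
      four_dvd_exponent a a₁ ν e₁ hnotsq haneg ha₁pos habs' he₁ hν1 r hr0 (K x) hQeq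
    obtain ⟨m, hm⟩ := h4
    have hr1 : r ^ ((2:ℕ)^(ν+1)) = (a:ℚ) ^ (2*m) := by
      have hs : (r ^ ((2:ℕ)^(ν+1)))^2 = ((a:ℚ)^(2*m))^2 := by
        rw [← pow_mul]
        have h2 : (2:ℕ)^(ν+1)*2 = 2^(ν+2) := by ring
        rw [h2, hQeq, hm]
        rw [← zpow_natCast ((a:ℚ)^(2*m)) 2, ← zpow_mul]
        congr 1
        push_cast
        ring
      have hpos1 : (0:ℚ) ≤ r ^ ((2:ℕ)^(ν+1)) := by
        rw [show (2:ℕ)^(ν+1) = 2^ν*2 by ring, pow_mul]; exact sq_nonneg _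
      have hpos2 : (0:ℚ) ≤ (a:ℚ)^(2*m) := by
        rw [show (2:ℤ)*m = m*2 by ring, zpow_mul, zpow_two]
        exact mul_self_nonneg _
      exact (pow_left_strictMonoOn₀ two_ne_zero).injOn hpos1 hpos2 hs
    have hx1 : (x : Qbarˣ) ^ ((2:ℤ)^(ν+1)) = aUnit a ha ^ (2*m) := by
      apply Units.ext
      rw [Units.val_zpow_eq_zpow_val, Units.val_zpow_eq_zpow_val, hAval, ← hr, ← map_zpow₀,
        ← map_zpow₀]
      congr 1
    have hb1 : b ^ (-((2:ℤ)^(ν+1) * K x)) = aUnit a ha ^ (-(2*m)) := by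
      rw [hm]
      rw [show -((2:ℤ)^(ν+1) * (4*m)) = (2:ℤ)^(ν+2) * (-(2*m)) by ring, zpow_mul, hbz]
    apply Subtype.ext
    rw [hτapp, hTapp, hSapp, hx1, hb1, ← zpow_add]
    simp
  -- τ is the identity on the smaller radical
  have hτid : ∀ x : ↥(radical a ha (2^(ν+2))),
      (x : Qbarˣ) ∈ radical a ha (2^(ν+1)) → τ x = x := by
    intro x hx
    obtain ⟨m, hm⟩ := (hmemIff _ _).mp hx
    have hmz : (x:Qbarˣ) ^ ((2:ℤ)^(ν+1)) = aUnit a ha ^ m := by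
      rw [show ((2:ℤ)^(ν+1)) = (((2^(ν+1):ℕ)):ℤ) by push_cast; ring, zpow_natCast]
      exact hm
    have hKx : K x = 2*m := by
      apply hAinj
      rw [← hKz x, show ((2:ℤ)^(ν+2)) = (2:ℤ)^(ν+1) * 2 by ring, zpow_mul, hmz, ← zpow_mul]
      congr 1
      ring
    apply Subtype.ext
    rw [hτapp, hTapp, hSapp, hmz, hKx,
      show -((2:ℤ)^(ν+1) * (2*m)) = (2:ℤ)^(ν+2) * (-m) by ring, zpow_mul, hbz, ← zpow_add]
    simp
  -- τ negates square roots of c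
  have hτα : ∀ (α : Qbarˣ) (hmem : α ∈ radical a ha (2^(ν+2))), ((α:Qbar))^2 = (c:Qbar) →
      ((τ ⟨α, hmem⟩ : Qbarˣ) : Qbar) = -(α : Qbar) := by
    intro α hmem hα
    have hKα : K ⟨α, hmem⟩ = 2 := by
      apply hAinj
      rw [← hKz ⟨α, hmem⟩]
      show α ^ ((2:ℤ)^(ν+2)) = aUnit a ha ^ (2:ℤ)
      rw [show ((2:ℤ)^(ν+2)) = (((2^(ν+2):ℕ)):ℤ) by push_cast; ring, zpow_natCast]
      exact hpartA α hα
    have hαp : α ^ ((2:ℤ)^(ν+1)) = - aUnit a ha := by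
      apply Units.ext
      rw [Units.val_zpow_eq_zpow_val, Units.val_neg]
      rw [show ((2:ℤ)^(ν+1)) = (((2^(ν+1):ℕ)):ℤ) by push_cast; ring, zpow_natCast]
      rw [show (2:ℕ)^(ν+1) = 2*2^ν by ring, pow_mul, hα]
      have hcv : ((aUnit a ha : Qbarˣ) : Qbar) = ((a:ℤ):Qbar) := rfl
      rw [hcv]
      calc ((c:ℤ):Qbar) ^ ((2:ℕ)^ν) = (((c ^ ((2:ℕ)^ν) : ℤ)):Qbar) := by push_cast; ring
      _ = ((-a : ℤ):Qbar) := by rw [hint1]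
      _ = -((a:ℤ):Qbar) := by push_cast; ring
    have hSα : S ⟨α, hmem⟩ = -1 := by
      rw [hSapp, hKα]
      show α ^ ((2:ℤ)^(ν+1)) * b ^ (-((2:ℤ)^(ν+1) * 2)) = -1
      rw [hαp, show -((2:ℤ)^(ν+1) * 2) = (2:ℤ)^(ν+2) * (-1) by ring, zpow_mul, hbz]
      simp
    have h1 : ((τ ⟨α, hmem⟩ : ↥(radical a ha (2^(ν+2)))) : Qbarˣ) = -α := by
      rw [hτapp, hTapp, hSα]
      simp
    rw [h1, Units.val_neg]
  refine ⟨hmemA, ⟨τ, hτmem, ⟨hτid, hτα⟩⟩, ?_⟩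
  -- Part 3
  intro τ' hτ' hid α hmem hα
  have hsub : α ∈ radical a ha (2^(ν+2)) := hmemA α hα
  have h1 := hid ⟨α, hmem⟩ hsub
  rw [h1]
end
end

section
/- Suppose e is odd or a > 0 (the untwisted case); write e = 2^ν e₁ with ν = ν_2(e) and e₁ odd, let a₁ be the positive integer with a₁^e = |a|, and set c = sgn(a)·a₁^{e₁} ∈ ℤ. Then every α ∈ Q̄ with α² = c lies in R_{2^{ν+1}}, and: (1) there exists an automorphism τ of R_{2^{ν+1}} fixing ℚ^× ∩ R_{2^{ν+1}} pointwise whose restriction to R_{2^{ν}} is the identity and which satisfies τ(α) = −α for every α with α² = c; (2) every automorphism τ′ of R_{2^{ν+2}} fixing ℚ^× ∩ R_{2^{ν+2}} pointwise whose restriction to R_{2^{ν+1}} is the identity satisfies τ′(α) = α for every α with α² = c. (Equivalently, s = ν_2(e)+1 is the smallest k for which the quadratic character ψ_{K,2} of A_2 = lim← A(2^j) factors through A(2^k).) -/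
noncomputable section

/-- Auxiliary: padicValRat of a zpow. -/
lemma padicValRat_zpow' (p : ℕ) [Fact p.Prime] {q : ℚ} (hq : q ≠ 0) (k : ℤ) :
    padicValRat p (q ^ k) = k * padicValRat p q := by
  cases k with
  | ofNat n => rw [Int.ofNat_eq_coe, zpow_natCast, padicValRat.pow q]
  | negSucc n =>
      rw [zpow_negSucc, padicValRat.inv, padicValRat.pow q, Int.negSucc_eq]
      push_cast; ring

/-- Auxiliary: if every prime exponent of `N` is divisible by `m`, `N` is a perfect
`m`-th power. -/
lemma exists_pow_of_dvd_factorization' (N m : ℕ) (hN : N ≠ 0)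
    (h : ∀ p, m ∣ N.factorization p) : ∃ b : ℕ, N = b ^ m := by
  refine ⟨N.factorization.prod fun p k => p ^ (k / m), ?_⟩
  conv_lhs => rw [← Nat.factorization_prod_pow_eq_self hN]
  rw [Finsupp.prod, Finsupp.prod, ← Finset.prod_pow]
  refine Finset.prod_congr rfl fun p hp => ?_
  rw [← pow_mul, Nat.div_mul_cancel (h p)]

/-- Auxiliary: powers of `a` in `Q̄ˣ` have distinct exponents. -/
lemma aUnit_zpow_inj' (a : ℤ) (ha : a ≠ 0) (ha1 : a ≠ 1) (ham1 : a ≠ -1)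
    {j k : ℤ} (h : aUnit a ha ^ j = aUnit a ha ^ k) : j = k := by
  have h2 : ((a : Qbar)) ^ j = ((a : Qbar)) ^ k := by
    have := congrArg (Units.val) h
    rwa [Units.val_zpow_eq_zpow_val, Units.val_zpow_eq_zpow_val] at this
  have h3 : (algebraMap ℚ Qbar) ((a:ℚ) ^ j) = (algebraMap ℚ Qbar) ((a:ℚ) ^ k) := by
    rw [map_zpow₀, map_zpow₀, map_intCast]; exact h2
  have h4 : (a:ℚ) ^ j = (a:ℚ) ^ k := (algebraMap ℚ Qbar).injective h3
  have habs : ∀ (x : ℚ) (j : ℤ), |x ^ j| = |x| ^ j := by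
    intro x j
    cases j with
    | ofNat n => simp [zpow_natCast, abs_pow]
    | negSucc n => simp [zpow_negSucc, abs_inv, abs_pow]
  have h5 : |(a:ℚ)| ^ j = |(a:ℚ)| ^ k := by
    rw [← habs, ← habs, h4]
  refine zpow_right_injective₀ (abs_pos.2 (by exact_mod_cast ha)) ?_ h5
  intro hh
  rcases (abs_eq (by norm_num : (0:ℚ) ≤ 1)).1 hh with h | h
  · exact ha1 (by exact_mod_cast h)
  · exact ham1 (by exact_mod_cast h)

/-- Auxiliary: the key arithmetic fact.  If `q^{2^{ν+1}} = a^k` with `q` rational, then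
`k` is even (using maximality of `e` and `ν = ν₂(e)`). -/
lemma even_of_rat_pow (a : ℤ) (ha : a ≠ 0) (e : ℕ)
    (he : IsGreatest {m : ℕ | 0 < m ∧ ∃ b : ℕ, |a| = (b : ℤ) ^ m} e)
    (ν e₁ : ℕ) (he₁ : Odd e₁) (hee : e = 2 ^ ν * e₁)
    (q : ℚ) (k : ℤ) (hq0 : q ≠ 0) (hqa : q ^ ((2:ℕ) ^ (ν+1)) = (a:ℚ) ^ k) : Even k := by
  by_contra hk
  rw [Int.not_even_iff_odd] at hk
  have haq : (a:ℚ) ≠ 0 := by exact_mod_cast ha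
  have hNe : a.natAbs ≠ 0 := Int.natAbs_ne_zero.2 ha
  -- 2^(ν+1) divides every prime exponent of |a|
  have key : ∀ p : ℕ, p.Prime → (2:ℕ)^(ν+1) ∣ a.natAbs.factorization p := by
    intro p hp
    haveI : Fact p.Prime := ⟨hp⟩
    have h1 : (((2:ℕ)^(ν+1) : ℕ) : ℤ) * padicValRat p q = k * padicValRat p (a:ℚ) := by
      have := congrArg (padicValRat p) hqa
      rwa [padicValRat.pow q, padicValRat_zpow' p haq] at this
    have hval : padicValRat p (a:ℚ) = (a.natAbs.factorization p : ℤ) := by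
      rw [padicValRat.of_int, padicValInt, Nat.factorization_def _ hp]
    have hdvd : ((2:ℤ)^(ν+1)) ∣ k * (a.natAbs.factorization p : ℤ) := by
      refine ⟨padicValRat p q, ?_⟩
      rw [← hval, ← h1]; push_cast; ring
    have hcop : IsCoprime ((2:ℤ)^(ν+1)) k := by
      apply IsCoprime.pow_left
      rw [Int.isCoprime_iff_gcd_eq_one]
      have : Odd k.natAbs := Int.natAbs_odd.mpr hk
      simpa [Int.gcd] using this.coprime_two_left
    have h2 : ((2:ℤ)^(ν+1)) ∣ (a.natAbs.factorization p : ℤ) :=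
      hcop.dvd_of_dvd_mul_left hdvd
    exact_mod_cast h2
  have h2dvd : ∀ p, (2:ℕ)^(ν+1) ∣ a.natAbs.factorization p := by
    intro p
    by_cases hp : p.Prime
    · exact key p hp
    · simp [Nat.factorization_eq_zero_of_not_prime _ hp]
  -- e divides every prime exponent of |a|
  obtain ⟨b, hb⟩ := he.1.2
  have hbN : a.natAbs = b ^ e := by
    have := congrArg Int.natAbs hb
    rwa [Int.natAbs_abs, ← Nat.cast_pow, Int.natAbs_natCast] at this
  have hedvd : ∀ p, e ∣ a.natAbs.factorization p := by
    intro p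
    rw [hbN, Nat.factorization_pow]
    exact Dvd.intro _ rfl
  -- hence lcm e 2^(ν+1) does, so |a| is a perfect lcm-th power
  set L := Nat.lcm e (2^(ν+1)) with hL
  obtain ⟨b', hb'⟩ := exists_pow_of_dvd_factorization' a.natAbs L hNe
    (fun p => Nat.lcm_dvd (hedvd p) (h2dvd p))
  have hLpos : 0 < L :=
    Nat.pos_of_ne_zero (Nat.lcm_ne_zero (Nat.pos_iff_ne_zero.1 he.1.1) (by positivity))
  have hmemL : L ∈ {m : ℕ | 0 < m ∧ ∃ b : ℕ, |a| = (b : ℤ) ^ m} := by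
    refine ⟨hLpos, b', ?_⟩
    rw [Int.abs_eq_natAbs, hb']
    push_cast; ring
  have hLle : L ≤ e := he.2 hmemL
  have hLe : L = e := le_antisymm hLle (Nat.le_of_dvd hLpos (Nat.dvd_lcm_left _ _))
  have h2e : (2:ℕ)^(ν+1) ∣ e := hLe ▸ Nat.dvd_lcm_right _ _
  rw [hee, pow_succ] at h2e
  have h2e1 : 2 ∣ e₁ := (mul_dvd_mul_iff_left (a := (2:ℕ)^ν) (by positivity)).1 h2e
  obtain ⟨t, ht⟩ := h2e1
  have := Nat.odd_iff.1 he₁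
  omega

/-- **Proposition 3.2, untwisted case** (`e` odd or `a > 0`, `e = 2^ν e₁` with `e₁` odd,
`c = sgn(a)·a₁^{e₁}`): every square root `α` of `c` lies in `R_{2^{ν+1}}`; there is an
automorphism of `R_{2^{ν+1}}` fixing `ℚ^× ∩ R_{2^{ν+1}}` pointwise, restricting to the
identity on `R_{2^ν}`, and sending each such `α` to `−α`; and every automorphism of
`R_{2^{ν+2}}` fixing `ℚ^× ∩ R_{2^{ν+2}}` pointwise and restricting to the identity on
`R_{2^{ν+1}}` fixes each such `α`. (Equivalently, `s = ν₂(e)+1` is the smallest `k` for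
which `ψ_{K,2}` factors through `A(2^k)`.) -/
theorem psi_factoring_untwisted
    (a : ℤ) (ha : a ≠ 0) (ha1 : a ≠ 1) (ham1 : a ≠ -1)
    (e : ℕ) (a₀ : ℤ)
    (he : IsGreatest {m : ℕ | 0 < m ∧ ∃ b : ℕ, |a| = (b : ℤ) ^ m} e)
    (ha₀ : |a₀| ^ e = |a|) (hsgn : a₀.sign = a.sign)
    (huntw : Odd e ∨ 0 < a)
    (ν e₁ : ℕ) (hν : ν = padicValNat 2 e) (he₁ : Odd e₁)
    (hee : e = 2 ^ ν * e₁)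
    (a₁ : ℕ) (ha₁ : ((a₁ : ℤ)) ^ e = |a|)
    (c : ℤ) (hc : c = a.sign * ((a₁ : ℤ)) ^ e₁) :
    (∀ α : Qbarˣ, ((α : Qbar)) ^ 2 = (c : Qbar) → α ∈ radical a ha (2 ^ (ν + 1))) ∧
    (∃ τ ∈ autGroup a ha (2 ^ (ν + 1)),
      (∀ x : ↥(radical a ha (2 ^ (ν + 1))),
          (x : Qbarˣ) ∈ radical a ha (2 ^ ν) → τ x = x) ∧
      ∀ (α : Qbarˣ) (hmem : α ∈ radical a ha (2 ^ (ν + 1))),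
        ((α : Qbar)) ^ 2 = (c : Qbar) →
          ((τ ⟨α, hmem⟩ : Qbarˣ) : Qbar) = -(α : Qbar)) ∧
    (∀ τ' ∈ autGroup a ha (2 ^ (ν + 2)),
      (∀ x : ↥(radical a ha (2 ^ (ν + 2))),
          (x : Qbarˣ) ∈ radical a ha (2 ^ (ν + 1)) → τ' x = x) →
      ∀ (α : Qbarˣ) (hmem : α ∈ radical a ha (2 ^ (ν + 2))),
        ((α : Qbar)) ^ 2 = (c : Qbar) →
          ((τ' ⟨α, hmem⟩ : Qbarˣ) : Qbar) = (α : Qbar)) := by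
  set A := aUnit a ha with hA
  set n : ℕ := 2 ^ (ν + 1) with hn
  -- the key arithmetic identity
  have hca : c ^ (2 ^ ν) = a := by
    have h1 : c ^ (2 ^ ν) = a.sign ^ (2 ^ ν) * |a| := by
      rw [hc, mul_pow, ← pow_mul, ← ha₁]
      congr 2
      rw [hee]; ring
    rcases huntw with hodd | hpos
    · have hν0 : ν = 0 := by
        by_contra hh
        have h2 : 2 ∣ e := by
          rw [hee]
          exact Dvd.dvd.mul_right (dvd_pow_self 2 hh) e₁
        rw [Nat.odd_iff] at hodd
        omega
      rw [hν0, pow_zero, pow_one] at h1 ⊢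
      rw [h1, pow_one, Int.sign_mul_abs]
    · rw [h1, Int.sign_eq_one_of_pos hpos, one_pow, one_mul, abs_of_pos hpos]
  -- values of square roots of c, raised to the n-th power, give a
  have hval : ∀ α : Qbarˣ, ((α : Qbar)) ^ 2 = (c : Qbar) → (α : Qbar) ^ n = (a : Qbar) := by
    intro α hα
    have : (α : Qbar) ^ n = ((α : Qbar) ^ 2) ^ (2 ^ ν) := by
      rw [← pow_mul, hn, pow_succ]; ring_nf
    rw [this, hα, ← Int.cast_pow, hca]
  -- Part 1
  have hpart1 : ∀ α : Qbarˣ, ((α : Qbar)) ^ 2 = (c : Qbar) → α ∈ radical a ha n := by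
    intro α hα
    refine Subgroup.mem_comap.mpr (Subgroup.mem_zpowers_iff.mpr ⟨1, ?_⟩)
    apply Units.ext
    rw [zpow_one]
    show (a : Qbar) = ((α ^ n : Qbarˣ) : Qbar)
    rw [Units.val_pow_eq_pow_val, hval α hα]
  refine ⟨hpart1, ?_, ?_⟩
  · -- Part 2: construction of τ
    have hneg : (-1 : Qbarˣ) ∈ radical a ha n := by
      refine Subgroup.mem_comap.mpr (Subgroup.mem_zpowers_iff.mpr ⟨0, ?_⟩)
      apply Units.ext
      show ((1 : Qbarˣ) : Qbar) = (((-1 : Qbarˣ) ^ n : Qbarˣ) : Qbar)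
      have : Even n := ⟨2 ^ ν, by rw [hn, pow_succ]; ring⟩
      simp [this.neg_one_pow]
    set R := radical a ha n with hR
    have hmem' : ∀ x : ↥R, ∃ m : ℤ, A ^ m = (x : Qbarˣ) ^ n := fun x =>
      Subgroup.mem_zpowers_iff.mp (Subgroup.mem_comap.mp x.2)
    choose K hK using hmem'
    have hinj : ∀ {j k : ℤ}, A ^ j = A ^ k → j = k := fun h => aUnit_zpow_inj' a ha ha1 ham1 h
    have hKadd : ∀ x y : ↥R, K (x * y) = K x + K y := by
      intro x y
      apply hinj
      rw [hK, zpow_add, hK, hK]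
      push_cast [mul_pow]
      rfl
    set ε : ↥R := ⟨-1, hneg⟩ with hε
    have hε2 : ε * ε = 1 := by
      apply Subtype.ext
      show ((-1 : Qbarˣ)) * (-1 : Qbarˣ) = 1
      simp
    have hKe : ∀ m : ℤ, K (ε ^ m) = 0 := by
      intro m
      apply hinj
      rw [hK, zpow_zero]
      show ((ε ^ m : ↥R) : Qbarˣ) ^ n = 1
      have h2 : ((ε ^ m : ↥R) : Qbarˣ) * ((ε ^ m : ↥R) : Qbarˣ) = 1 := by
        have h3 : (ε ^ m) * (ε ^ m) = 1 := by rw [← mul_zpow, hε2, one_zpow]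
        exact_mod_cast congrArg (fun z : ↥R => (z : Qbarˣ)) h3
      obtain ⟨k', hk'⟩ : Even n := ⟨2 ^ ν, by rw [hn, pow_succ]; ring⟩
      rw [hk', pow_add, ← mul_pow, h2, one_pow]
    have hεsq : ∀ m : ℤ, Even m → ε ^ m = 1 := by
      intro m ⟨t, ht⟩
      rw [ht, zpow_add, ← mul_zpow, hε2, one_zpow]
    set f : ↥R → ↥R := fun x => x * ε ^ K x with hf
    have hKf : ∀ x, K (f x) = K x := by
      intro x
      rw [hf]
      simp only
      rw [hKadd, hKe, add_zero]
    have hff : ∀ x, f (f x) = x := by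
      intro x
      rw [hf]
      simp only
      rw [hKf, mul_assoc, ← mul_zpow, hε2, one_zpow, mul_one]
    set τ : MulAut ↥R :=
      { toFun := f, invFun := f, left_inv := hff, right_inv := hff,
        map_mul' := by
          intro x y
          simp only [hf]
          rw [hKadd, zpow_add, mul_mul_mul_comm] } with hτ
    refine ⟨τ, ?_, ?_, ?_⟩
    · -- τ fixes ℚ^× ∩ R
      intro x hx
      obtain ⟨q, hq⟩ := hx
      have hq0 : q ≠ 0 := by
        rintro rfl
        exact Units.ne_zero (x : Qbarˣ) (by simpa using hq.symm)
      have hrat : q ^ n = (a : ℚ) ^ K x := by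
        apply (algebraMap ℚ Qbar).injective
        rw [map_pow, map_zpow₀, map_intCast, hq]
        have := congrArg Units.val (hK x)
        rw [Units.val_zpow_eq_zpow_val, Units.val_pow_eq_pow_val] at this
        exact this.symm
      have heven : Even (K x) :=
        even_of_rat_pow a ha e he ν e₁ he₁ hee q (K x) hq0 hrat
      show f x = x
      rw [hf]
      simp only
      rw [hεsq _ heven, mul_one]
    · -- τ is the identity on R_{2^ν}
      intro x hx
      obtain ⟨m, hm⟩ := Subgroup.mem_zpowers_iff.mp (Subgroup.mem_comap.mp hx)
      rw [powMonoidHom_apply] at hm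
      have hKx : K x = 2 * m := by
        apply hinj
        rw [hK]
        have hxn : (x : Qbarˣ) ^ n = ((x : Qbarˣ) ^ (2 ^ ν)) ^ 2 := by
          show (x : Qbarˣ) ^ (2 ^ (ν + 1)) = _
          rw [pow_succ, pow_mul]
        rw [hxn, ← hm]
        calc (A ^ m) ^ 2 = A ^ (m * 2) := by
              rw [← zpow_natCast (A ^ m) 2, ← zpow_mul]; norm_num
          _ = A ^ (2 * m) := by rw [mul_comm]
      show f x = x
      rw [hf]
      simp only
      rw [hεsq _ (by rw [hKx]; exact even_two_mul m), mul_one]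
    · -- τ negates square roots of c
      intro α hmem hα
      have hK1 : K ⟨α, hmem⟩ = 1 := by
        apply hinj
        rw [hK, zpow_one]
        apply Units.ext
        show ((α ^ n : Qbarˣ) : Qbar) = (a : Qbar)
        rw [Units.val_pow_eq_pow_val, hval α hα]
      show ((((⟨α, hmem⟩ : ↥R) * ε ^ K ⟨α, hmem⟩ : ↥R) : Qbarˣ) : Qbar) = -(α : Qbar)
      rw [hK1, zpow_one]
      show ((α * (-1 : Qbarˣ) : Qbarˣ) : Qbar) = -(α : Qbar)
      simp
  · -- Part 3
    intro τ' _ hid α hmem hα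
    have h1 : α ∈ radical a ha n := hpart1 α hα
    have h2 : τ' ⟨α, hmem⟩ = ⟨α, hmem⟩ := hid ⟨α, hmem⟩ h1
    rw [h2]
end
end

section
/- Suppose a is not a perfect square and the discriminant d of ℚ(√a) is odd (equivalently, a_sf ≡ 1 (mod 4)). Then E_a = 1 + ∏_{p ∣ 2d} (−1)/([ℚ(ζ_p, a^{1/p}) : ℚ] − 1), the product being over the primes dividing 2d. -/
noncomputable section

/-- `K_n = ℚ(ζ_n, a^{1/n})`, realized as the subfield of `Q̄` generated by all
`n`-th roots of `a` together with the primitive `n`-th roots of unity. -/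
def KummerField (a : ℤ) (n : ℕ) : IntermediateField ℚ Qbar :=
  IntermediateField.adjoin ℚ
    ({x : Qbar | x ^ n = (a : Qbar)} ∪ {x : Qbar | IsPrimitiveRoot x n})

/-- `[K_n : ℚ]`. -/
def kummerDeg (a : ℤ) (n : ℕ) : ℕ := Module.finrank ℚ ↥(KummerField a n)

open IntermediateField Polynomial in
lemma exists_gens (a : ℤ) (p : ℕ) (hp : 0 < p) :
    ∃ ζ r : Qbar, IsPrimitiveRoot ζ p ∧ r ^ p = (a : Qbar) := by
  haveI : NeZero p := ⟨hp.ne'⟩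
  haveI : NeZero ((p : ℕ) : Qbar) := ⟨by exact_mod_cast (Nat.cast_ne_zero (R := Qbar)).2 hp.ne'⟩
  obtain ⟨ζ, hζ⟩ := HasEnoughRootsOfUnity.exists_primitiveRoot Qbar p
  obtain ⟨r, hr⟩ := IsAlgClosed.exists_pow_nat_eq (a : Qbar) hp
  exact ⟨ζ, r, hζ, hr⟩

open IntermediateField Polynomial in
lemma kummerField_eq_adjoin {a : ℤ} (ha0 : a ≠ 0) {p : ℕ} (hp : p.Prime)
    {ζ r : Qbar} (hζ : IsPrimitiveRoot ζ p) (hr : r ^ p = (a : Qbar)) :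
    KummerField a p = IntermediateField.adjoin ℚ {ζ, r} := by
  haveI : NeZero p := ⟨hp.ne_zero⟩
  have haQ : (a : Qbar) ≠ 0 := Int.cast_ne_zero.2 ha0
  have hr0 : r ≠ 0 := by
    intro h; rw [h, zero_pow hp.ne_zero] at hr; exact haQ hr.symm
  have hζmem : ζ ∈ IntermediateField.adjoin ℚ ({ζ, r} : Set Qbar) :=
    subset_adjoin _ _ (Or.inl rfl)
  have hrmem : r ∈ IntermediateField.adjoin ℚ ({ζ, r} : Set Qbar) :=
    subset_adjoin _ _ (Or.inr rfl)
  apply le_antisymm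
  · rw [KummerField, adjoin_le_iff]
    rintro x (hx | hx)
    · have h1 : (x * r⁻¹) ^ p = 1 := by
        rw [mul_pow, hx, inv_pow, hr, mul_inv_cancel₀ haQ]
      obtain ⟨i, -, hi⟩ := hζ.eq_pow_of_pow_eq_one h1
      have : x = ζ ^ i * r := by
        rw [hi]; field_simp
      rw [this]
      exact mul_mem (pow_mem hζmem i) hrmem
    · obtain ⟨i, -, hi⟩ := hζ.eq_pow_of_pow_eq_one hx.pow_eq_one
      rw [← hi]
      exact pow_mem hζmem i
  · rw [adjoin_le_iff]
    rintro x (rfl | rfl)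
    · exact subset_adjoin _ _ (Or.inr hζ)
    · exact subset_adjoin _ _ (Or.inl hr)

open IntermediateField Polynomial in
lemma kummerDeg_of_pow {a : ℤ} (ha0 : a ≠ 0) {p : ℕ} (hp : p.Prime)
    {c : ℤ} (hc : a = c ^ p) : kummerDeg a p = p - 1 := by
  haveI : NeZero p := ⟨hp.ne_zero⟩
  obtain ⟨ζ, hζ⟩ := HasEnoughRootsOfUnity.exists_primitiveRoot Qbar p
  have hcZ : c ≠ 0 := by rintro rfl; simp [zero_pow hp.ne_zero] at hc; exact ha0 hc
  have hc0 : (c : Qbar) ≠ 0 := Int.cast_ne_zero.2 hcZ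
  have hK : KummerField a p = IntermediateField.adjoin ℚ {ζ} := by
    have hζmem : ζ ∈ IntermediateField.adjoin ℚ ({ζ} : Set Qbar) := subset_adjoin _ _ rfl
    apply le_antisymm
    · rw [KummerField, adjoin_le_iff]
      rintro x (hx | hx)
      · have h1 : (x * (c : Qbar)⁻¹) ^ p = 1 := by
          rw [mul_pow, hx, inv_pow, hc]
          push_cast
          rw [mul_inv_cancel₀ (pow_ne_zero _ hc0)]
        obtain ⟨i, -, hi⟩ := hζ.eq_pow_of_pow_eq_one h1
        have hx' : x = ζ ^ i * (c : Qbar) := by rw [hi]; field_simp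
        rw [hx']
        exact mul_mem (pow_mem hζmem i) (intCast_mem _ c)
      · obtain ⟨i, -, hi⟩ := hζ.eq_pow_of_pow_eq_one hx.pow_eq_one
        rw [← hi]
        exact pow_mem hζmem i
    · rw [adjoin_le_iff, Set.singleton_subset_iff]
      exact subset_adjoin _ _ (Or.inr hζ)
  have hint : IsIntegral ℚ ζ := (hζ.isIntegral hp.pos).tower_top
  rw [kummerDeg, hK, adjoin.finrank hint, ← cyclotomic_eq_minpoly_rat hζ hp.pos,
    natDegree_cyclotomic, Nat.totient_prime hp]

open IntermediateField Polynomial in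
lemma kummerDeg_of_not_pow {a : ℤ} (ha0 : a ≠ 0) {p : ℕ} (hp : p.Prime)
    (hc : ¬ ∃ c : ℤ, a = c ^ p) : kummerDeg a p = p * (p - 1) := by
  haveI : NeZero p := ⟨hp.ne_zero⟩
  obtain ⟨ζ, r, hζ, hr⟩ := exists_gens a p hp.pos
  -- irreducibility over ℚ
  have hirr : Irreducible (X ^ p - C (a : ℚ)) := by
    apply X_pow_sub_C_irreducible_of_prime hp
    intro b hb
    have hbint : IsIntegral ℤ b := by
      refine ⟨X ^ p - C a, monic_X_pow_sub_C a hp.ne_zero, ?_⟩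
      rw [eval₂_sub, eval₂_pow, eval₂_X, eval₂_C, hb]
      simp [algebraMap_int_eq, eq_intCast]
    obtain ⟨y, hy⟩ := IsIntegrallyClosed.isIntegral_iff.mp hbint
    apply hc
    refine ⟨y, ?_⟩
    have : ((y : ℚ)) ^ p = (a : ℚ) := by rw [show ((y:ℚ)) = b from hy, hb]
    exact_mod_cast this.symm
  -- minpoly of r over ℚ
  have haeval : Polynomial.aeval r (X ^ p - C (a : ℚ)) = 0 := by
    simp [map_sub, map_pow, aeval_X, aeval_C, hr]
  have hminr : minpoly ℚ r = X ^ p - C (a : ℚ) :=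
    (minpoly.eq_of_irreducible_of_monic hirr haeval (monic_X_pow_sub_C _ hp.ne_zero)).symm
  have hrint : IsIntegral ℚ r := ⟨X ^ p - C (a : ℚ), monic_X_pow_sub_C _ hp.ne_zero, by
    rw [← aeval_def]; exact haeval⟩
  have hfr : Module.finrank ℚ ℚ⟮r⟯ = p := by
    rw [adjoin.finrank hrint, hminr, natDegree_X_pow_sub_C]
  have hζint : IsIntegral ℚ ζ := (hζ.isIntegral hp.pos).tower_top
  have hfζ : Module.finrank ℚ ℚ⟮ζ⟯ = p - 1 := by
    rw [adjoin.finrank hζint, ← cyclotomic_eq_minpoly_rat hζ hp.pos,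
      natDegree_cyclotomic, Nat.totient_prime hp]
  set A := IntermediateField.adjoin ℚ ({ζ, r} : Set Qbar) with hA
  have hK : KummerField a p = A := kummerField_eq_adjoin ha0 hp hζ hr
  have hle_z : ℚ⟮ζ⟯ ≤ A := adjoin.mono _ _ _ (by intro x hx; exact Or.inl hx)
  have hle_r : ℚ⟮r⟯ ≤ A := adjoin.mono _ _ _ (by intro x hx; exact Or.inr hx)
  haveI : Finite ({ζ, r} : Set Qbar) := Set.Finite.to_subtype ((Set.finite_singleton r).insert ζ)
  haveI : FiniteDimensional ℚ A := finiteDimensional_adjoin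
    (by rintro x (rfl | rfl); exacts [hζint, hrint])
  have hNpos : 0 < Module.finrank ℚ A := Module.finrank_pos
  -- p divides [A : ℚ]
  have hdvd_p : p ∣ Module.finrank ℚ A := by
    have := finrank_bot_mul_relfinrank hle_r
    rw [hfr] at this
    exact Dvd.intro _ this
  -- tower over ℚ(ζ)
  have hkey : (p - 1) * relfinrank ℚ⟮ζ⟯ A = Module.finrank ℚ A := by
    rw [← hfζ]; exact finrank_bot_mul_relfinrank hle_z
  -- identify the top of the tower
  have hadj : IntermediateField.adjoin ℚ⟮ζ⟯ ({ζ, r} : Set Qbar)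
      = IntermediateField.adjoin ℚ⟮ζ⟯ ({r} : Set Qbar) := by
    apply le_antisymm
    · rw [adjoin_le_iff]
      rintro x (rfl | rfl)
      · exact _root_.algebraMap_mem _ (⟨x, mem_adjoin_simple_self ℚ x⟩ : ℚ⟮x⟯)
      · exact subset_adjoin _ _ rfl
    · exact adjoin.mono _ _ _ (by intro x hx; exact Or.inr hx)
  have htval : relfinrank ℚ⟮ζ⟯ A = (minpoly ℚ⟮ζ⟯ r).natDegree := by
    rw [relfinrank_eq_finrank_of_le hle_z, extendScalars_adjoin hle_z, hadj,
      adjoin.finrank (hrint.tower_top)]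
  -- the minimal polynomial over ℚ(ζ) divides X^p - a
  set e : ℚ⟮ζ⟯ := (⟨(a : Qbar), intCast_mem _ a⟩ : ℚ⟮ζ⟯) with he
  have hdvd_min : minpoly ℚ⟮ζ⟯ r ∣ X ^ p - C e := by
    apply minpoly.dvd
    rw [map_sub, map_pow, aeval_X, aeval_C]
    show r ^ p - (e : Qbar) = 0
    rw [hr, he]
    simp
  have ht_le : (minpoly ℚ⟮ζ⟯ r).natDegree ≤ p := by
    have h0 : (X ^ p - C e : Polynomial ℚ⟮ζ⟯) ≠ 0 := X_pow_sub_C_ne_zero hp.pos e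
    calc (minpoly ℚ⟮ζ⟯ r).natDegree ≤ (X ^ p - C e : Polynomial ℚ⟮ζ⟯).natDegree :=
          natDegree_le_of_dvd hdvd_min h0
      _ = p := natDegree_X_pow_sub_C
  have hco : Nat.Coprime p (p - 1) := by
    rw [Nat.Prime.coprime_iff_not_dvd hp]
    intro hdvd
    have h2 := hp.two_le
    have h3 := Nat.le_of_dvd (by omega) hdvd
    omega
  have hpt : p ∣ relfinrank ℚ⟮ζ⟯ A := by
    refine hco.dvd_of_dvd_mul_left ?_
    rw [hkey]; exact hdvd_p
  have ht_ge : p ≤ relfinrank ℚ⟮ζ⟯ A := by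
    refine Nat.le_of_dvd ?_ hpt
    rcases Nat.eq_zero_or_pos (relfinrank ℚ⟮ζ⟯ A) with h0 | h0
    · rw [h0, mul_zero] at hkey; omega
    · exact h0
  have ht : relfinrank ℚ⟮ζ⟯ A = p := le_antisymm (htval ▸ ht_le) ht_ge
  rw [kummerDeg, hK, ← hkey, ht, mul_comm]

lemma nat_pow_of_dvd_factorization {n k : ℕ} (hn : n ≠ 0) (hk : k ≠ 0)
    (h : ∀ p, k ∣ n.factorization p) : ∃ m : ℕ, n = m ^ k := by
  refine ⟨n.factorization.prod fun p e => p ^ (e / k), ?_⟩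
  conv_lhs => rw [← Nat.factorization_prod_pow_eq_self hn]
  rw [Finsupp.prod, Finsupp.prod, ← Finset.prod_pow]
  refine Finset.prod_congr rfl fun p hp => ?_
  rw [← pow_mul, Nat.div_mul_cancel (h p)]

lemma int_pow_of_dvd {a : ℤ} (ha0 : a ≠ 0) {m n : ℕ} (hm : 0 < m) (hn : 0 < n)
    (hmn : Nat.Coprime m n) (h1 : ∃ c : ℤ, a = c ^ m) (h2 : ∃ c : ℤ, a = c ^ n) :
    ∃ c : ℤ, a = c ^ (m * n) := by
  obtain ⟨c, rfl⟩ := h1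
  obtain ⟨c', h2⟩ := h2
  have hc0 : c ≠ 0 := by rintro rfl; simp [zero_pow hm.ne'] at ha0
  have hna : (c ^ m).natAbs ≠ 0 := by simpa using pow_ne_zero m hc0
  have hfact : ∀ p, (m * n) ∣ (c ^ m).natAbs.factorization p := by
    intro p
    have e1 : (c ^ m).natAbs = c.natAbs ^ m := by rw [Int.natAbs_pow]
    have e2 : (c ^ m).natAbs = c'.natAbs ^ n := by rw [h2, Int.natAbs_pow]
    have d1 : m ∣ (c ^ m).natAbs.factorization p := by
      rw [e1, Nat.factorization_pow]; exact Dvd.intro _ rfl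
    have d2 : n ∣ (c ^ m).natAbs.factorization p := by
      rw [e2, Nat.factorization_pow]; exact Dvd.intro _ rfl
    exact Nat.Coprime.mul_dvd_of_dvd_of_dvd hmn d1 d2
  obtain ⟨w, hw⟩ := nat_pow_of_dvd_factorization hna (by positivity) hfact
  rcases le_or_gt 0 (c ^ m) with hpos | hneg
  · refine ⟨(w : ℤ), ?_⟩
    have : (c ^ m) = ((c ^ m).natAbs : ℤ) := by rw [Int.natAbs_of_nonneg hpos]
    rw [this, hw]; push_cast; ring
  · -- a < 0, so m and n are odd
    have hmodd : Odd m := by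
      by_contra hme
      rw [Nat.not_odd_iff_even] at hme
      exact absurd (hme.pow_nonneg c) (not_le.2 hneg)
    have hnodd : Odd n := by
      by_contra hne
      rw [Nat.not_odd_iff_even] at hne
      rw [h2] at hneg
      exact absurd (hne.pow_nonneg c') (not_le.2 hneg)
    refine ⟨-(w : ℤ), ?_⟩
    have h3 : (c ^ m) = -((c ^ m).natAbs : ℤ) := by
      rw [Int.ofNat_natAbs_of_nonpos hneg.le]; ring
    rw [h3, hw, (hmodd.mul hnodd).neg_pow]
    push_cast; ring

lemma dvd_h_of_pow {a : ℤ} (ha0 : a ≠ 0)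
    {h : ℕ} (hh : IsGreatest {m : ℕ | 0 < m ∧ ∃ c : ℤ, a = c ^ m} h)
    {p : ℕ} (hp : p.Prime) (hc : ∃ c : ℤ, a = c ^ p) : p ∣ h := by
  by_contra hnd
  have hh1 := hh.1
  obtain ⟨hhpos, hch⟩ := hh1
  have hco : Nat.Coprime p h := (Nat.Prime.coprime_iff_not_dvd hp).2 hnd
  have hmem : p * h ∈ {m : ℕ | 0 < m ∧ ∃ c : ℤ, a = c ^ m} :=
    ⟨Nat.mul_pos hp.pos hhpos, int_pow_of_dvd ha0 hp.pos hhpos hco hc hch⟩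
  have := hh.2 hmem
  nlinarith [hp.two_le]

open ArithmeticFunction in
/-- **Lenstra–Moree–Stevenhagen, Theorem 4.2 form of the correction factor**: if `a` is not
a perfect square and the discriminant `d` of `ℚ(√a)` is odd (equivalently
`a_sf ≡ 1 (mod 4)`), then `E_a = 1 + ∏_{p ∣ 2d} (−1)/([ℚ(ζ_p, a^{1/p}) : ℚ] − 1)`. -/
theorem correction_factor_product
    (a : ℤ) (ha0 : a ≠ 0) (ha1 : a ≠ 1) (ham1 : a ≠ -1)
    -- `a` is not a perfect square
    (hnsq : ¬ ∃ c : ℤ, a = c ^ 2)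
    -- `h` is the largest positive integer for which `a` is a perfect `h`-th power
    (h : ℕ) (hh : IsGreatest {m : ℕ | 0 < m ∧ ∃ c : ℤ, a = c ^ m} h)
    -- `a = a_sf · b²` with `b` the largest positive integer whose square divides `a`
    (b : ℕ) (hb : IsGreatest {c : ℕ | 0 < c ∧ ((c : ℤ)) ^ 2 ∣ a} b)
    (asf : ℤ) (hasf : a = asf * (b : ℤ) ^ 2)
    -- `d` is the discriminant of `ℚ(√a) = ℚ(√a_sf)`, assumed odd
    (d : ℤ) (hd : d = if asf % 4 = 1 then asf else 4 * asf) (hodd : Odd d) :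
    1 - ((moebius asf.natAbs : ℤ) : ℝ) *
        ∏ p ∈ asf.natAbs.primeFactors,
          (if p ∣ h then 1 / ((p : ℝ) - 2) else 1 / ((p : ℝ) ^ 2 - (p : ℝ) - 1)) =
      1 + ∏ p ∈ (2 * d).natAbs.primeFactors, (-1 : ℝ) / ((kummerDeg a p : ℝ) - 1) := by
  have hbpos : 0 < b := hb.1.1
  have hasf0 : asf ≠ 0 := by
    rintro rfl; rw [zero_mul] at hasf; exact ha0 hasf
  have hdasf : d = asf := by
    rw [hd]
    by_cases hmod : asf % 4 = 1
    · rw [if_pos hmod]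
    · exfalso
      rw [hd, if_neg hmod] at hodd
      exact (Int.not_odd_iff_even.2 ⟨2 * asf, by ring⟩) hodd
  have hasfodd : Odd asf := hdasf ▸ hodd
  have hasfnodd : Odd asf.natAbs := Int.natAbs_odd.2 hasfodd
  -- squarefree
  have hsq : Squarefree asf.natAbs := by
    rw [Nat.squarefree_iff_prime_squarefree]
    intro q hq hqq
    have h1 : (q : ℤ) * (q : ℤ) ∣ asf := by
      have h0 : ((q * q : ℕ) : ℤ) ∣ ((asf.natAbs : ℕ) : ℤ) := Int.natCast_dvd_natCast.2 hqq
      have h1 := Int.dvd_natAbs.1 h0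
      push_cast at h1
      exact h1
    have h2 : ((q * b : ℕ) : ℤ) ^ 2 ∣ a := by
      rw [hasf]
      push_cast
      obtain ⟨t, ht⟩ := h1
      exact ⟨t, by rw [ht]; ring⟩
    have hle := hb.2 ⟨Nat.mul_pos hq.pos hbpos, h2⟩
    have := hq.two_le
    nlinarith
  have h2notin : 2 ∉ asf.natAbs.primeFactors := by
    intro hmem
    have := Nat.dvd_of_mem_primeFactors hmem
    rw [Nat.odd_iff] at hasfnodd
    omega
  have hset : (2 * d).natAbs.primeFactors = insert 2 asf.natAbs.primeFactors := by
    rw [hdasf, Int.natAbs_mul,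
      Nat.primeFactors_mul (by norm_num) (Int.natAbs_ne_zero.2 hasf0)]
    rw [show (2:ℤ).natAbs = 2 from rfl, Nat.Prime.primeFactors Nat.prime_two, Finset.insert_eq]
  have hdeg2 : kummerDeg a 2 = 2 := by
    have := kummerDeg_of_not_pow ha0 Nat.prime_two hnsq
    norm_num at this
    exact this
  have hdeg : ∀ p ∈ asf.natAbs.primeFactors,
      (-1 : ℝ) / ((kummerDeg a p : ℝ) - 1) =
        (-1) * (if p ∣ h then 1 / ((p : ℝ) - 2) else 1 / ((p : ℝ) ^ 2 - (p : ℝ) - 1)) := by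
    intro p hpmem
    have hpp : p.Prime := Nat.prime_of_mem_primeFactors hpmem
    have hp2 : 2 ≤ p := hpp.two_le
    by_cases hdvdh : p ∣ h
    · obtain ⟨c0, hc0⟩ := hh.1.2
      obtain ⟨k, hk⟩ := hdvdh
      have hpow : a = (c0 ^ k) ^ p := by rw [hc0, hk, mul_comm, pow_mul]
      rw [kummerDeg_of_pow ha0 hpp hpow, if_pos ⟨k, hk⟩]
      have hcast : ((p - 1 : ℕ) : ℝ) = (p : ℝ) - 1 := by
        push_cast [Nat.cast_sub (by omega : 1 ≤ p)]; ring
      rw [hcast]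
      have : (p : ℝ) - 1 - 1 = (p : ℝ) - 2 := by ring
      rw [this, neg_div, ← neg_one_mul, one_div]
    · have hnp : ¬ ∃ c : ℤ, a = c ^ p := fun hcp => hdvdh (dvd_h_of_pow ha0 hh hpp hcp)
      rw [kummerDeg_of_not_pow ha0 hpp hnp, if_neg hdvdh]
      have hcast : ((p * (p - 1) : ℕ) : ℝ) = (p : ℝ) * ((p : ℝ) - 1) := by
        push_cast [Nat.cast_sub (by omega : 1 ≤ p)]; ring
      rw [hcast]
      have : (p : ℝ) * ((p : ℝ) - 1) - 1 = (p : ℝ) ^ 2 - (p : ℝ) - 1 := by ring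
      rw [this, neg_div, ← neg_one_mul, one_div]
  have hmoeb : ((moebius asf.natAbs : ℤ) : ℝ) = (-1 : ℝ) ^ asf.natAbs.primeFactors.card := by
    rw [moebius_apply_of_squarefree hsq]
    have hω : asf.natAbs.primeFactors.card = cardDistinctFactors asf.natAbs := by
      rw [cardDistinctFactors_apply]
      exact List.card_toFinset _
    have hΩ : cardDistinctFactors asf.natAbs = cardFactors asf.natAbs :=
      (cardDistinctFactors_eq_cardFactors_iff_squarefree (Int.natAbs_ne_zero.2 hasf0)).2 hsq
    rw [hω, hΩ]
    push_cast
    ring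
  rw [hset, Finset.prod_insert h2notin, hdeg2, Finset.prod_congr rfl hdeg,
    Finset.prod_mul_distrib, Finset.prod_const, hmoeb]
  norm_num
  ring
end
end
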